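/- For every (n,m) ∈ N̂₀² and every (n,m)-permutation ρ ∈ S_{n,m}, the word â_{n,m}[ρ] = (∏_{i=1}^n z_i t_i)(∏_{i=1}^{n+m} z_{iρ})(∏_{i=n+1}^{n+m} t_i z_i) (the word obtained from a_{n,m}[ρ] by deleting both occurrences of the letter x) is an isoterm for the factor monoid M(xzxyty): every word w such that M(xzxyty) satisfies the identity â_{n,m}[ρ] ≈ w equals â_{n,m}[ρ]. -/

import Mathlib

/-! ## Words over a countably infinite alphabet -/

/-- `Word` is the free monoid `F` over the countably infinite alphabet `X = ℕ`. -/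
abbrev Word : Type := FreeMonoid ℕ

/-- The letter with index `i`, as a one-letter word. -/
def ltr (i : ℕ) : Word := FreeMonoid.of i

/-- The distinguished letters `x`, `y`, `z`, `t`, `s`. -/
def wx : Word := ltr 0
def wy : Word := ltr 1
def wz : Word := ltr 2
def wt : Word := ltr 3
def ws : Word := ltr 4

/-- The letters `z_i` for `i ≥ 1` (distinct from `x,y,z,t,s` and from all `t_j`). -/
def wzi (i : ℕ) : Word := ltr (2 * i + 10)

/-- The letters `t_i` for `i ≥ 1`. -/
def wti (i : ℕ) : Word := ltr (2 * i + 11)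

/-- `pr a len f = f (a+1) * f (a+2) * ⋯ * f (a+len)`, i.e. `∏_{i=a+1}^{a+len} f i`. -/
def pr (a len : ℕ) (f : ℕ → Word) : Word :=
  ((List.range len).map (fun i => f (a + 1 + i))).prod

/-- The word `u` read from right to left. -/
def revW (u : Word) : Word := FreeMonoid.ofList (FreeMonoid.toList u).reverse

/-- `ρ : ℕ → ℕ` is (restricts to) a permutation of `{1,…,N}`. -/
def IsPermOn (ρ : ℕ → ℕ) (N : ℕ) : Prop :=
  Set.BijOn ρ (Set.Icc 1 N) (Set.Icc 1 N)

/-- `ρ` is a `(p,q)`-permutation: a permutation of `{1,…,p+q}` such that for each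
`i = 1,…,p+q-1` exactly one of `ρ i`, `ρ (i+1)` lies in `{1,…,p}`. -/
def IsPQPerm (ρ : ℕ → ℕ) (p q : ℕ) : Prop :=
  IsPermOn ρ (p + q) ∧
    ∀ i : ℕ, 1 ≤ i → i < p + q → (ρ i ∈ Set.Icc 1 p ↔ ¬ ρ (i + 1) ∈ Set.Icc 1 p)

/-- `(n,m) ∈ N̂₀²`, i.e. `|n - m| ≤ 1`. -/
def InHatN (n m : ℕ) : Prop := n ≤ m + 1 ∧ m ≤ n + 1

/-! ## The words `a_{n,m}[ρ]`, `c_{n,m,k}[τ]`, `d_{n,m,k}[τ]` and friends -/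

/-- `a_{n,m}[ρ] = (∏_{i=1}^n z_i t_i) x (∏_{i=1}^{n+m} z_{iρ}) x (∏_{i=n+1}^{n+m} t_i z_i)`. -/
def wordA (n m : ℕ) (ρ : ℕ → ℕ) : Word :=
  pr 0 n (fun i => wzi i * wti i) * wx * pr 0 (n + m) (fun i => wzi (ρ i)) * wx *
    pr n m (fun i => wti i * wzi i)

/-- `a'_{n,m}[ρ] = (∏_{i=1}^n z_i t_i) x² (∏_{i=1}^{n+m} z_{iρ}) (∏_{i=n+1}^{n+m} t_i z_i)`. -/
def wordA' (n m : ℕ) (ρ : ℕ → ℕ) : Word :=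
  pr 0 n (fun i => wzi i * wti i) * (wx * wx) * pr 0 (n + m) (fun i => wzi (ρ i)) *
    pr n m (fun i => wti i * wzi i)

/-- `â_{n,m}[ρ]`: the word `a_{n,m}[ρ]` with both occurrences of `x` deleted. -/
def hatA (n m : ℕ) (ρ : ℕ → ℕ) : Word :=
  pr 0 n (fun i => wzi i * wti i) * pr 0 (n + m) (fun i => wzi (ρ i)) *
    pr n m (fun i => wti i * wzi i)

/-- `c_{n,m,k}[τ]`. -/
def wordC (n m k : ℕ) (τ : ℕ → ℕ) : Word :=
  pr 0 n (fun i => wzi i * wti i) * (wx * wy * wt) * pr n m (fun i => wzi i * wti i) * wx *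
    pr 0 (n + m + k) (fun i => wzi (τ i)) * wy * pr (n + m) k (fun i => wti i * wzi i)

/-- `c'_{n,m,k}[τ]` (the factor `xyt` of `c_{n,m,k}[τ]` replaced by `yxt`). -/
def wordC' (n m k : ℕ) (τ : ℕ → ℕ) : Word :=
  pr 0 n (fun i => wzi i * wti i) * (wy * wx * wt) * pr n m (fun i => wzi i * wti i) * wx *
    pr 0 (n + m + k) (fun i => wzi (τ i)) * wy * pr (n + m) k (fun i => wti i * wzi i)

/-- `d_{n,m,k}[τ]`: the word `c_{n,m,k}[τ]` read from right to left. -/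
def wordD (n m k : ℕ) (τ : ℕ → ℕ) : Word := revW (wordC n m k τ)

/-- `d'_{n,m,k}[τ]`: the word `c'_{n,m,k}[τ]` read from right to left. -/
def wordD' (n m k : ℕ) (τ : ℕ → ℕ) : Word := revW (wordC' n m k τ)

/-! ## Fully invariant congruences -/

/-- `θ` is a fully invariant congruence on the free monoid `F`. -/
structure IsFIC (θ : Word → Word → Prop) : Prop where
  refl : ∀ u, θ u u
  symm : ∀ {u v}, θ u v → θ v u
  trans : ∀ {u v w}, θ u v → θ v w → θ u w
  mul : ∀ {u₁ v₁ u₂ v₂}, θ u₁ v₁ → θ u₂ v₂ → θ (u₁ * u₂) (v₁ * v₂)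
  subst : ∀ (σ : Word →* Word) {u v}, θ u v → θ (σ u) (σ v)

/-- Containment of binary relations (sets of identities). -/
def RelLe (S θ : Word → Word → Prop) : Prop := ∀ u v, S u v → θ u v

/-- `⟨S⟩`: the least fully invariant congruence containing the set `S` of identities. -/
def ficGen (S : Word → Word → Prop) : Word → Word → Prop :=
  fun u v => ∀ θ : Word → Word → Prop, IsFIC θ → RelLe S θ → θ u v

/-- Intersection of two relations: the meet in the lattice of fully invariant congruences. -/
def RelMeet (θ₁ θ₂ : Word → Word → Prop) : Word → Word → Prop := fun u v => θ₁ u v ∧ θ₂ u v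

/-- The join of two fully invariant congruences. -/
def ficJoin (θ₁ θ₂ : Word → Word → Prop) : Word → Word → Prop :=
  ficGen (fun u v => θ₁ u v ∨ θ₂ u v)

/-- The lattice of all fully invariant congruences on `F` containing `θ` is distributive
(meets in this lattice are intersections, joins are generated joins). -/
def FICLatDistrib (θ : Word → Word → Prop) : Prop :=
  ∀ a b c : Word → Word → Prop, IsFIC a → IsFIC b → IsFIC c →
    RelLe θ a → RelLe θ b → RelLe θ c →
      ∀ u v, RelMeet a (ficJoin b c) u v ↔ ficJoin (RelMeet a b) (RelMeet a c) u v

/-- The lattice of all fully invariant congruences on `F` containing `θ` is modular. -/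
def FICLatModular (θ : Word → Word → Prop) : Prop :=
  ∀ a b c : Word → Word → Prop, IsFIC a → IsFIC b → IsFIC c →
    RelLe θ a → RelLe θ b → RelLe θ c → RelLe a c →
      ∀ u v, ficJoin a (RelMeet b c) u v ↔ RelMeet (ficJoin a b) c u v

/-! ## Satisfaction and factor monoids -/

/-- The monoid `M` satisfies the identity `u ≈ v`. -/
def MSat (M : Type) [Monoid M] (u v : Word) : Prop := ∀ f : Word →* M, f u = f v

/-- The underlying type of the factor monoid `M(w)`: all factors (contiguous subwords)
of `w` together with an extra zero element (`none`). -/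
abbrev Factor (w : List ℕ) : Type := Option { u : List ℕ // u <:+: w }

namespace Factor

variable {w : List ℕ}

instance : One (Factor w) := ⟨some ⟨[], List.nil_infix⟩⟩

instance : Mul (Factor w) :=
  ⟨fun a b =>
    match a, b with
    | none, _ => none
    | some _, none => none
    | some u, some v => if h : (u.1 ++ v.1) <:+: w then some ⟨u.1 ++ v.1, h⟩ else none⟩

theorem none_mul (a : Factor w) : (none : Factor w) * a = none := rfl

theorem mul_none (a : Factor w) : a * (none : Factor w) = none := by cases a <;> rfl

theorem some_mul_some (u v : { u : List ℕ // u <:+: w }) :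
    (some u : Factor w) * some v =
      if h : (u.1 ++ v.1) <:+: w then some ⟨u.1 ++ v.1, h⟩ else none := rfl

theorem one_def : (1 : Factor w) = some ⟨[], List.nil_infix⟩ := rfl

private theorem infix_left {u v : List ℕ} (h : (u ++ v) <:+: w) : u <:+: w :=
  (List.prefix_append u v).isInfix.trans h

private theorem infix_right {u v : List ℕ} (h : (u ++ v) <:+: w) : v <:+: w :=
  (List.suffix_append u v).isInfix.trans h

instance : Monoid (Factor w) where
  mul_assoc a b c := by
    rcases a with _ | u
    · simp [none_mul]
    rcases b with _ | v
    · rw [mul_none, none_mul, mul_none]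
    rcases c with _ | t
    · rw [mul_none, mul_none, mul_none]
    by_cases h : (u.1 ++ (v.1 ++ t.1)) <:+: w
    · have h' : ((u.1 ++ v.1) ++ t.1) <:+: w := by rwa [List.append_assoc]
      have huv : (u.1 ++ v.1) <:+: w := by
        refine infix_left (v := t.1) ?_; rwa [List.append_assoc]
      have hvt : (v.1 ++ t.1) <:+: w := infix_right h
      rw [some_mul_some u v, dif_pos huv, some_mul_some v t, dif_pos hvt,
        some_mul_some, dif_pos h', some_mul_some, dif_pos h]
      exact congrArg some (Subtype.ext (List.append_assoc _ _ _))
    · have h' : ¬ ((u.1 ++ v.1) ++ t.1) <:+: w := by rwa [List.append_assoc]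
      rw [some_mul_some u v, some_mul_some v t]
      by_cases huv : (u.1 ++ v.1) <:+: w
      · rw [dif_pos huv]
        by_cases hvt : (v.1 ++ t.1) <:+: w
        · rw [dif_pos hvt, some_mul_some, dif_neg h', some_mul_some, dif_neg h]
        · rw [dif_neg hvt, some_mul_some, dif_neg h', mul_none]
      · rw [dif_neg huv, none_mul]
        by_cases hvt : (v.1 ++ t.1) <:+: w
        · rw [dif_pos hvt, some_mul_some, dif_neg h]
        · rw [dif_neg hvt, mul_none]
  one_mul a := by
    rcases a with _ | u
    · rw [mul_none]
    · rw [one_def, some_mul_some, dif_pos (by simpa using u.2)]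
      exact congrArg some (Subtype.ext (List.nil_append _))
  mul_one a := by
    rcases a with _ | u
    · rw [none_mul]
    · rw [one_def, some_mul_some, dif_pos (by simpa using u.2)]
      exact congrArg some (Subtype.ext (List.append_nil _))

end Factor

/-- `Th(M(w))`: the set of identities holding in the factor monoid `M(w)`. -/
def ThFM (w : List ℕ) : Word → Word → Prop :=
  fun u v => ∀ f : Word →* Factor w, f u = f v

/-! ## Distinguished identities and sets of identities -/

/-- The identity `α : xzytxy ≈ xzytyx` (as a pair of words). -/
def idAlphaL : Word := wx * wz * wy * wt * wx * wy
def idAlphaR : Word := wx * wz * wy * wt * wy * wx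

/-- The identity `β : xzxyty ≈ xzyxty`. -/
def idBetaL : Word := wx * wz * wx * wy * wt * wy
def idBetaR : Word := wx * wz * wy * wx * wt * wy

/-- The set of identities defining the variety `N`:
`{x² ≈ x³, x²y ≈ yx², xyxzx ≈ x²yz, α, β}`. -/
def SigmaN : Word → Word → Prop := fun u v =>
  (u = wx ^ 2 ∧ v = wx ^ 3) ∨
  (u = wx ^ 2 * wy ∧ v = wy * wx ^ 2) ∨
  (u = wx * wy * wx * wz * wx ∧ v = wx ^ 2 * wy * wz) ∨
  (u = idAlphaL ∧ v = idAlphaR) ∨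
  (u = idBetaL ∧ v = idBetaR)

/-- `θ_N = ⟨Σ_N⟩`: the fully invariant congruence of the variety `N`. -/
def thetaN : Word → Word → Prop := ficGen SigmaN

/-- The set `Σ_P(n)` of identities defining the variety `P_n`. -/
def SigmaP (n : ℕ) : Word → Word → Prop := fun u v =>
  (u = wx ^ n ∧ v = wx ^ (n + 1)) ∨
  (u = wx ^ 2 * wy ∧ v = wy * wx ^ 2) ∨
  (∃ (k l : ℕ) (ρ : ℕ → ℕ), IsPermOn ρ (k + l) ∧ u = wordA k l ρ ∧ v = wordA' k l ρ) ∨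
  (∃ (k l m : ℕ) (τ : ℕ → ℕ), IsPermOn τ (k + l + m) ∧ u = wordC k l m τ ∧ v = wordC' k l m τ) ∨
  (∃ (k l m : ℕ) (τ : ℕ → ℕ), IsPermOn τ (k + l + m) ∧ u = wordD k l m τ ∧ v = wordD' k l m τ)

/-- The set `Σ_Q(n) = {x^n ≈ x^{n+1}, x^n y ≈ y x^n, x²y ≈ xyx}`. -/
def SigmaQ (n : ℕ) : Word → Word → Prop := fun u v =>
  (u = wx ^ n ∧ v = wx ^ (n + 1)) ∨
  (u = wx ^ n * wy ∧ v = wy * wx ^ n) ∨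
  (u = wx ^ 2 * wy ∧ v = wx * wy * wx)

/-- The set `Σ_R(n) = {x^n ≈ x^{n+1}, x²y ≈ yx², α, β}`. -/
def SigmaR (n : ℕ) : Word → Word → Prop := fun u v =>
  (u = wx ^ n ∧ v = wx ^ (n + 1)) ∨
  (u = wx ^ 2 * wy ∧ v = wy * wx ^ 2) ∨
  (u = idAlphaL ∧ v = idAlphaR) ∨
  (u = idBetaL ∧ v = idBetaR)

/-- `Σ^δ`: the set of reversed identities (both sides read from right to left). -/
def SigmaDual (S : Word → Word → Prop) : Word → Word → Prop :=
  fun u v => ∃ a b, S a b ∧ u = revW a ∧ v = revW b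

/-- Left-hand side of the identity `δ_{n,m}`: `x^m t₁ x t₂ x ⋯ t_n x`. -/
def deltaL (n m : ℕ) : Word := wx ^ m * ((List.range n).map (fun i => wti (i + 1) * wx)).prod

/-- Right-hand side of the identity `δ_{n,m}`: `x^{m+n} t₁ t₂ ⋯ t_n`. -/
def deltaR (n m : ℕ) : Word := wx ^ (m + n) * ((List.range n).map (fun i => wti (i + 1))).prod

/-- The word `x^{e₀} ∏_{i=1}^r (t_i x^{e_i})`. -/
def wordE (r : ℕ) (e : ℕ → ℕ) : Word :=
  wx ^ (e 0) * ((List.range r).map (fun i => wti (i + 1) * wx ^ (e (i + 1)))).prod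

/-- The word `x^{e₀} y^{f₀} ∏_{i=1}^r (t_i x^{e_i} y^{f_i})`. -/
def wordEF (r : ℕ) (e f : ℕ → ℕ) : Word :=
  wx ^ (e 0) * wy ^ (f 0) *
    ((List.range r).map (fun i => wti (i + 1) * wx ^ (e (i + 1)) * wy ^ (f (i + 1)))).prod

/-- The word `y^{f₀} x^{e₀} ∏_{i=1}^r (t_i x^{e_i} y^{f_i})`. -/
def wordEF' (r : ℕ) (e f : ℕ → ℕ) : Word :=
  wy ^ (f 0) * wx ^ (e 0) *
    ((List.range r).map (fun i => wti (i + 1) * wx ^ (e (i + 1)) * wy ^ (f (i + 1)))).prod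

/-! ## Aperiodicity and central idempotents -/

/-- The subset `S` of `M` is a subsemigroup which is a group under the induced
multiplication. -/
def IsGroupSubsemigroup {M : Type} [Monoid M] (S : Set M) : Prop :=
  (∀ a ∈ S, ∀ b ∈ S, a * b ∈ S) ∧
    ∃ e ∈ S, (∀ a ∈ S, e * a = a ∧ a * e = a) ∧ ∀ a ∈ S, ∃ b ∈ S, a * b = e ∧ b * a = e

/-- `M` is aperiodic: every subsemigroup of `M` which is a group under the induced
multiplication is a singleton. -/
def Aperiodic (M : Type) [Monoid M] : Prop :=
  ∀ S : Set M, IsGroupSubsemigroup S → ∃ a, S = {a}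

/-- `M` has central idempotents. -/
def CentralIdempotents (M : Type) [Monoid M] : Prop :=
  ∀ e : M, e * e = e → ∀ a : M, e * a = a * e


namespace S7

abbrev W : List ℕ := [0, 2, 0, 1, 3, 1]

noncomputable def enc (l : List ℕ) : Factor W :=
  if h : l <:+: W then some ⟨l, h⟩ else none

theorem enc_nil : enc [] = 1 := by
  rw [enc, dif_pos List.nil_infix]; rfl

theorem enc_mul (l l' : List ℕ) : enc (l ++ l') = enc l * enc l' := by
  by_cases h : (l ++ l') <:+: W
  · have hl : l <:+: W := (List.prefix_append l l').isInfix.trans h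
    have hl' : l' <:+: W := (List.suffix_append l l').isInfix.trans h
    rw [enc, enc, enc, dif_pos h, dif_pos hl, dif_pos hl', Factor.some_mul_some, dif_pos h]
  · rw [enc, dif_neg h]
    by_cases hl : l <:+: W
    · by_cases hl' : l' <:+: W
      · rw [enc, enc, dif_pos hl, dif_pos hl', Factor.some_mul_some, dif_neg h]
      · rw [enc, enc, dif_pos hl, dif_neg hl', Factor.mul_none]
    · rw [enc, dif_neg hl, Factor.none_mul]

theorem enc_inj {l l' : List ℕ} (h : l <:+: W) (he : enc l = enc l') : l = l' := by
  rw [enc, enc, dif_pos h] at he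
  by_cases h' : l' <:+: W
  · rw [dif_pos h'] at he
    exact congrArg Subtype.val (Option.some_injective _ he :
      (⟨l, h⟩ : { u : List ℕ // u <:+: W }) = ⟨l', h'⟩)
  · rw [dif_neg h'] at he; exact absurd he (by simp)

noncomputable def fhom (c : ℕ → Option ℕ) : Word →* Factor W :=
  FreeMonoid.lift (fun a => enc (c a).toList)

theorem fhom_apply (c : ℕ → Option ℕ) (l : List ℕ) :
    fhom c (FreeMonoid.ofList l) = enc (l.filterMap c) := by
  induction l with
  | nil => simpa [List.filterMap_nil, enc_nil] using map_one (fhom c)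
  | cons a l ih =>
      have : FreeMonoid.ofList (a :: l) = FreeMonoid.of a * FreeMonoid.ofList l := rfl
      rw [this, map_mul, ih]
      show enc (c a).toList * enc (l.filterMap c) = _
      rw [← enc_mul, List.filterMap_cons]
      cases h : c a <;> simp [h]

end S7
namespace S7

/-- pair projection -/
def pf2 (a b : ℕ) (l : List ℕ) : List ℕ := l.filter (fun x => x = a ∨ x = b)

theorem pf2_comm (a b : ℕ) (l : List ℕ) : pf2 a b l = pf2 b a l := by
  unfold pf2; apply List.filter_congr; intro x _; simp [or_comm]

theorem pf2_ext {l l' : List ℕ} (h : ∀ a b, pf2 a b l = pf2 a b l') : l = l' := by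
  induction l generalizing l' with
  | nil =>
      cases l' with
      | nil => rfl
      | cons b t => have h1 := h b b; simp [pf2] at h1
  | cons a t ih =>
      cases l' with
      | nil => have h1 := h a a; simp [pf2] at h1
      | cons b t' =>
          have hd : a = b := by
            have h1 := h a b
            rw [pf2, pf2, List.filter_cons_of_pos (by simp), List.filter_cons_of_pos (by simp)]
              at h1
            exact (List.cons.inj h1).1
          subst hd
          have ht : t = t' := by
            apply ih; intro x y
            have h1 := h x y
            by_cases hc : a = x ∨ a = y
            · rw [pf2, pf2, List.filter_cons_of_pos (by simpa), List.filter_cons_of_pos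
                (by simpa)] at h1
              exact (List.cons.inj h1).2
            · rw [pf2, pf2, List.filter_cons_of_neg (by simpa [not_or] using hc),
                List.filter_cons_of_neg (by simpa [not_or] using hc)] at h1
              exact h1
          rw [ht]

theorem filter_isSome_eq (c : ℕ → Option ℕ) (d : ℕ → ℕ)
    (hd : ∀ x y, c x = some y → d y = x) (l : List ℕ) :
    l.filter (fun x => (c x).isSome) = (l.filterMap c).map d := by
  induction l with
  | nil => simp
  | cons a l ih =>
      cases h : c a with
      | none => simp [List.filter_cons, List.filterMap_cons, h, ih]
      | some y => simp [List.filter_cons, List.filterMap_cons, h, ih, hd a y h]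

theorem filterMap_eq_filterMap_filter (c : ℕ → Option ℕ) (l : List ℕ) :
    l.filterMap c = (l.filter (fun x => (c x).isSome)).filterMap c := by
  induction l with
  | nil => simp
  | cons a l ih =>
      cases h : c a with
      | none => simp [List.filter_cons, List.filterMap_cons, h, ih]
      | some y => simp [List.filter_cons, List.filterMap_cons, h, ih]

theorem flat_zero {g : ℕ → List ℕ} {len : ℕ} (h : ∀ k, k < len → g k = []) :
    ((List.range len).map g).flatten = [] := by
  induction len with
  | zero => rfl
  | succ len ih =>
      rw [List.range_succ]
      simp [h len (by omega), ih (fun k hk => h k (by omega))]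

theorem flat_one {g : ℕ → List ℕ} {len i : ℕ} (hi : i < len)
    (h : ∀ k, k < len → k ≠ i → g k = []) :
    ((List.range len).map g).flatten = g i := by
  induction len with
  | zero => omega
  | succ len ih =>
      rw [List.range_succ, List.map_append, List.flatten_append]
      by_cases hc : i = len
      · subst hc
        rw [flat_zero (fun k hk => h k (by omega) (by omega))]; simp
      · rw [ih (by omega) (fun k hk hne => h k (by omega) hne)]
        simp [h len (by omega) (fun hh => hc hh.symm)]

theorem flat_two {g : ℕ → List ℕ} {len i j : ℕ} (hij : i < j) (hj : j < len)
    (h : ∀ k, k < len → k ≠ i → k ≠ j → g k = []) :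
    ((List.range len).map g).flatten = g i ++ g j := by
  induction len with
  | zero => omega
  | succ len ih =>
      rw [List.range_succ, List.map_append, List.flatten_append]
      by_cases hc : j = len
      · subst hc
        rw [flat_one (by omega) (fun k hk hne => h k (by omega) hne (by omega))]; simp
      · rw [ih (by omega) (fun k hk h1 h2 => h k (by omega) h1 h2)]
        simp [h len (by omega) (fun hh => by omega) (fun hh => hc hh.symm)]

theorem toList_prod (L : List Word) :
    FreeMonoid.toList L.prod = (L.map FreeMonoid.toList).flatten := by
  induction L with
  | nil => simp
  | cons a L ih => simp [FreeMonoid.toList_mul, ih]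

def ZL (i : ℕ) : ℕ := 2 * i + 10
def TL (i : ℕ) : ℕ := 2 * i + 11

theorem pr_toList (a len : ℕ) (f : ℕ → Word) :
    FreeMonoid.toList (pr a len f) =
      ((List.range len).map (fun k => FreeMonoid.toList (f (a + 1 + k)))).flatten := by
  unfold pr; rw [toList_prod, List.map_map]; rfl

theorem hatA_toList (n m : ℕ) (ρ : ℕ → ℕ) :
    FreeMonoid.toList (hatA n m ρ) =
      ((List.range n).map (fun k => [ZL (k + 1), TL (k + 1)])).flatten ++
      ((List.range (n + m)).map (fun k => [ZL (ρ (k + 1))])).flatten ++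
      ((List.range m).map (fun k => [TL (n + 1 + k), ZL (n + 1 + k)])).flatten := by
  unfold hatA
  rw [FreeMonoid.toList_mul, FreeMonoid.toList_mul, pr_toList, pr_toList, pr_toList]
  congr 2
  · refine congrArg List.flatten ?_
    apply List.map_congr_left; intro k _
    simp only [FreeMonoid.toList_mul, wzi, wti, ltr, FreeMonoid.toList_of, ZL, TL]
    have : 0 + 1 + k = k + 1 := by omega
    rw [this]; rfl
  · refine congrArg List.flatten ?_
    apply List.map_congr_left; intro k _
    simp only [wzi, ltr, FreeMonoid.toList_of, ZL]
    have : 0 + 1 + k = k + 1 := by omega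
    rw [this]

end S7
namespace S7

def psi3 (a b c : ℕ) : Fin 3 → ℕ
  | 0 => a
  | 1 => b
  | 2 => c

@[simp] theorem psi3_0 (a b c : ℕ) : psi3 a b c 0 = a := rfl
@[simp] theorem psi3_1 (a b c : ℕ) : psi3 a b c 1 = b := rfl
@[simp] theorem psi3_2 (a b c : ℕ) : psi3 a b c 2 = c := rfl

theorem psi3_inj {a b c : ℕ} (hab : a ≠ b) (hac : a ≠ c) (hbc : b ≠ c) :
    Function.Injective (psi3 a b c) := by
  intro y z h
  fin_cases y <;> fin_cases z <;> simp_all [psi3] <;> omega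

def psi4 (a b c d : ℕ) : Fin 4 → ℕ
  | 0 => a
  | 1 => b
  | 2 => c
  | 3 => d

@[simp] theorem psi4_0 (a b c d : ℕ) : psi4 a b c d 0 = a := rfl
@[simp] theorem psi4_1 (a b c d : ℕ) : psi4 a b c d 1 = b := rfl
@[simp] theorem psi4_2 (a b c d : ℕ) : psi4 a b c d 2 = c := rfl
@[simp] theorem psi4_3 (a b c d : ℕ) : psi4 a b c d 3 = d := rfl

theorem psi4_inj {a b c d : ℕ} (hab : a ≠ b) (hac : a ≠ c) (had : a ≠ d)
    (hbc : b ≠ c) (hbd : b ≠ d) (hcd : c ≠ d) :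
    Function.Injective (psi4 a b c d) := by
  intro y z h
  fin_cases y <;> fin_cases z <;> simp_all [psi4] <;> omega

theorem transfer3 (a b c : ℕ) (hab : a ≠ b) (hac : a ≠ c) (hbc : b ≠ c) (l : List ℕ) :
    ∃ G : List (Fin 3),
      l.filter (fun x => x = a ∨ x = b ∨ x = c) = G.map (psi3 a b c) ∧
      ∀ i j : Fin 3,
      pf2 (psi3 a b c i) (psi3 a b c j) l =
        (G.filter (fun y => y = i ∨ y = j)).map (psi3 a b c) := by
  classical
  refine ⟨(l.filter (fun x => x = a ∨ x = b ∨ x = c)).map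
    (fun x => if x = a then (0 : Fin 3) else if x = b then 1 else 2), ?_, ?_⟩
  · rw [List.map_map]
    refine Eq.symm ((List.map_congr_left ?_).trans (List.map_id _))
    intro x hx
    have hx3 : x = a ∨ x = b ∨ x = c := by
      have := List.of_mem_filter hx; simpa using this
    rcases hx3 with h | h | h <;> subst h <;>
      simp [Function.comp, hab, hbc, Ne.symm hab, Ne.symm hac, Ne.symm hbc]
  intro i j
  have hmem3 : ∀ i : Fin 3, psi3 a b c i = a ∨ psi3 a b c i = b ∨ psi3 a b c i = c := by
    intro i; fin_cases i <;> simp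
  rw [List.filter_map, List.map_map]
  have hstep1 : pf2 (psi3 a b c i) (psi3 a b c j) l =
      (l.filter (fun x => x = a ∨ x = b ∨ x = c)).filter
        (fun x => x = psi3 a b c i ∨ x = psi3 a b c j) := by
    rw [pf2, List.filter_filter]
    apply List.filter_congr; intro x _
    by_cases hx : x = psi3 a b c i ∨ x = psi3 a b c j
    · have hx2 : x = a ∨ x = b ∨ x = c := by
        rcases hx with h | h <;> rw [h] <;> exact hmem3 _
      simp [hx, hx2]
    · simp [hx]
  rw [hstep1]
  have hpred : ∀ x ∈ l.filter (fun x => x = a ∨ x = b ∨ x = c),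
      (decide (x = psi3 a b c i ∨ x = psi3 a b c j)) =
        ((fun y => decide (y = i ∨ y = j)) ∘ fun x => if x = a then (0 : Fin 3) else
          if x = b then 1 else 2) x := by
    intro x hx
    have hx3 : x = a ∨ x = b ∨ x = c := by
      have := List.of_mem_filter hx; simpa using this
    rcases hx3 with h | h | h <;> subst h <;>
      fin_cases i <;> fin_cases j <;>
      simp_all [hab, hac, hbc, Ne.symm hab, Ne.symm hac, Ne.symm hbc]
  rw [List.filter_congr hpred]
  refine Eq.symm ((List.map_congr_left ?_).trans (List.map_id _))
  intro x hx
  have hx3 : x = a ∨ x = b ∨ x = c := by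
    have := List.of_mem_filter (List.mem_of_mem_filter hx)
    simpa using this
  rcases hx3 with h | h | h <;> subst h <;>
    simp [Function.comp, hab, hbc, Ne.symm hab, Ne.symm hac, Ne.symm hbc]

theorem transfer4 (a b c d : ℕ) (hab : a ≠ b) (hac : a ≠ c) (had : a ≠ d)
    (hbc : b ≠ c) (hbd : b ≠ d) (hcd : c ≠ d) (l : List ℕ) :
    ∃ G : List (Fin 4),
      l.filter (fun x => x = a ∨ x = b ∨ x = c ∨ x = d) = G.map (psi4 a b c d) ∧
      ∀ i j : Fin 4,
      pf2 (psi4 a b c d i) (psi4 a b c d j) l =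
        (G.filter (fun y => y = i ∨ y = j)).map (psi4 a b c d) := by
  classical
  refine ⟨(l.filter (fun x => x = a ∨ x = b ∨ x = c ∨ x = d)).map
    (fun x => if x = a then (0 : Fin 4) else if x = b then 1 else if x = c then 2 else 3),
    ?_, ?_⟩
  · rw [List.map_map]
    refine Eq.symm ((List.map_congr_left ?_).trans (List.map_id _))
    intro x hx
    have hx4 : x = a ∨ x = b ∨ x = c ∨ x = d := by
      have := List.of_mem_filter hx; simpa using this
    rcases hx4 with h | h | h | h <;> subst h <;>
      simp [Function.comp, hab, hac, had, hbc, hbd, hcd, Ne.symm hab, Ne.symm hac,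
        Ne.symm had, Ne.symm hbc, Ne.symm hbd, Ne.symm hcd]
  intro i j
  have hmem4 : ∀ i : Fin 4,
      psi4 a b c d i = a ∨ psi4 a b c d i = b ∨ psi4 a b c d i = c ∨ psi4 a b c d i = d := by
    intro i; fin_cases i <;> simp
  rw [List.filter_map, List.map_map]
  have hstep1 : pf2 (psi4 a b c d i) (psi4 a b c d j) l =
      (l.filter (fun x => x = a ∨ x = b ∨ x = c ∨ x = d)).filter
        (fun x => x = psi4 a b c d i ∨ x = psi4 a b c d j) := by
    rw [pf2, List.filter_filter]
    apply List.filter_congr; intro x _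
    by_cases hx : x = psi4 a b c d i ∨ x = psi4 a b c d j
    · have hx2 : x = a ∨ x = b ∨ x = c ∨ x = d := by
        rcases hx with h | h <;> rw [h] <;> exact hmem4 _
      simp [hx, hx2]
    · simp [hx]
  rw [hstep1]
  have hpred : ∀ x ∈ l.filter (fun x => x = a ∨ x = b ∨ x = c ∨ x = d),
      (decide (x = psi4 a b c d i ∨ x = psi4 a b c d j)) =
        ((fun y => decide (y = i ∨ y = j)) ∘ fun x => if x = a then (0 : Fin 4) else
          if x = b then 1 else if x = c then 2 else 3) x := by
    intro x hx
    have hx4 : x = a ∨ x = b ∨ x = c ∨ x = d := by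
      have := List.of_mem_filter hx; simpa using this
    rcases hx4 with h | h | h | h <;> subst h <;>
      fin_cases i <;> fin_cases j <;>
      simp_all [hab, hac, had, hbc, hbd, hcd, Ne.symm hab, Ne.symm hac, Ne.symm had,
        Ne.symm hbc, Ne.symm hbd, Ne.symm hcd]
  rw [List.filter_congr hpred]
  refine Eq.symm ((List.map_congr_left ?_).trans (List.map_id _))
  intro x hx
  have hx4 : x = a ∨ x = b ∨ x = c ∨ x = d := by
    have := List.of_mem_filter (List.mem_of_mem_filter hx)
    simpa using this
  rcases hx4 with h | h | h | h <;> subst h <;>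
    simp [Function.comp, hab, hac, had, hbc, hbd, hcd, Ne.symm hab, Ne.symm hac, Ne.symm had,
      Ne.symm hbc, Ne.symm hbd, Ne.symm hcd]

end S7
namespace S7

theorem len3 (G : List (Fin 3)) :
    G.length = G.count 0 + G.count 1 + G.count 2 := by
  induction G with
  | nil => rfl
  | cons g G ih =>
      fin_cases g <;> simp [List.count_cons, ih] <;> omega

theorem len4 (G : List (Fin 4)) :
    G.length = G.count 0 + G.count 1 + G.count 2 + G.count 3 := by
  induction G with
  | nil => rfl
  | cons g G ih =>
      fin_cases g <;> simp [List.count_cons, ih] <;> omega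

theorem exists_list5 {α : Type} (G : List α) (h : G.length = 5) :
    ∃ x1 x2 x3 x4 x5, G = [x1, x2, x3, x4, x5] := by
  rcases G with _ | ⟨x1, _ | ⟨x2, _ | ⟨x3, _ | ⟨x4, _ | ⟨x5, _ | ⟨x6, G⟩⟩⟩⟩⟩⟩ <;>
    simp_all

theorem exists_list6 {α : Type} (G : List α) (h : G.length = 6) :
    ∃ x1 x2 x3 x4 x5 x6, G = [x1, x2, x3, x4, x5, x6] := by
  rcases G with _ | ⟨x1, _ | ⟨x2, _ | ⟨x3, _ | ⟨x4, _ | ⟨x5, _ | ⟨x6, _ | ⟨x7, G⟩⟩⟩⟩⟩⟩⟩ <;>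
    simp_all

theorem count_of_pf {k : ℕ} (G : List (Fin k)) (p : Fin k → Bool) (L : List (Fin k))
    (h : G.filter p = L) (a : Fin k) (ha : p a = true) : G.count a = L.count a := by
  rw [← h, List.count_filter ha]

set_option synthInstance.maxSize 3000
set_option synthInstance.maxHeartbeats 2000000
set_option maxHeartbeats 8000000

theorem DL1 (G : List (Fin 4))
    (h1 : G.filter (fun y => y = 0 ∨ y = 1) = [0, 1, 0])
    (h2 : G.filter (fun y => y = 1 ∨ y = 2) = [1, 2, 2])
    (h3 : G.filter (fun y => y = 0 ∨ y = 3) = [0, 0, 3])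
    (h4 : G.filter (fun y => y = 2 ∨ y = 3) = [2, 3, 2]) :
    G = [0, 1, 0, 2, 3, 2] ∨ G = [0, 1, 2, 0, 3, 2] := by
  have hlen : G.length = 6 := by
    rw [len4, count_of_pf G _ _ h1 0 (by simp), count_of_pf G _ _ h1 1 (by simp),
      count_of_pf G _ _ h4 2 (by simp), count_of_pf G _ _ h4 3 (by simp)]
    decide
  obtain ⟨x1, x2, x3, x4, x5, x6, rfl⟩ := exists_list6 G hlen
  clear hlen
  revert h1 h2 h3 h4
  revert x1 x2 x3 x4 x5 x6
  decide

theorem DLA (G : List (Fin 3))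
    (h1 : G.filter (fun y => y = 0 ∨ y = 1) = [0, 1, 0])
    (h2 : G.filter (fun y => y = 1 ∨ y = 2) = [1, 2, 2]) :
    G.filter (fun y => y = 0 ∨ y = 2) = [0, 0, 2, 2] ∨
    G.filter (fun y => y = 0 ∨ y = 2) = [0, 2, 0, 2] ∨
    G.filter (fun y => y = 0 ∨ y = 2) = [0, 2, 2, 0] := by
  have hlen : G.length = 5 := by
    rw [len3, count_of_pf G _ _ h1 0 (by simp), count_of_pf G _ _ h1 1 (by simp),
      count_of_pf G _ _ h2 2 (by simp)]
    decide
  obtain ⟨x1, x2, x3, x4, x5, rfl⟩ := exists_list5 G hlen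
  clear hlen
  revert h1 h2
  revert x1 x2 x3 x4 x5
  decide

theorem DLB (G : List (Fin 3))
    (h1 : G.filter (fun y => y = 0 ∨ y = 1) = [0, 1, 0])
    (h2 : G.filter (fun y => y = 1 ∨ y = 2) = [2, 1, 2]) :
    G.filter (fun y => y = 0 ∨ y = 2) = [0, 2, 0, 2] ∨
    G.filter (fun y => y = 0 ∨ y = 2) = [2, 0, 2, 0] ∨
    G.filter (fun y => y = 0 ∨ y = 2) = [0, 2, 2, 0] ∨
    G.filter (fun y => y = 0 ∨ y = 2) = [2, 0, 0, 2] := by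
  have hlen : G.length = 5 := by
    rw [len3, count_of_pf G _ _ h1 0 (by simp), count_of_pf G _ _ h1 1 (by simp),
      count_of_pf G _ _ h2 2 (by simp)]
    decide
  obtain ⟨x1, x2, x3, x4, x5, rfl⟩ := exists_list5 G hlen
  clear hlen
  revert h1 h2
  revert x1 x2 x3 x4 x5
  decide

theorem DLD (G : List (Fin 3))
    (h1 : G.filter (fun y => y = 0 ∨ y = 1) = [0, 0, 1])
    (h2 : G.filter (fun y => y = 1 ∨ y = 2) = [2, 1, 2]) :
    G.filter (fun y => y = 0 ∨ y = 2) = [0, 0, 2, 2] ∨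
    G.filter (fun y => y = 0 ∨ y = 2) = [0, 2, 0, 2] ∨
    G.filter (fun y => y = 0 ∨ y = 2) = [2, 0, 0, 2] := by
  have hlen : G.length = 5 := by
    rw [len3, count_of_pf G _ _ h1 0 (by simp), count_of_pf G _ _ h1 1 (by simp),
      count_of_pf G _ _ h2 2 (by simp)]
    decide
  obtain ⟨x1, x2, x3, x4, x5, rfl⟩ := exists_list5 G hlen
  clear hlen
  revert h1 h2
  revert x1 x2 x3 x4 x5
  decide

theorem DLC1 (G : List (Fin 3))
    (h1 : G.filter (fun y => y = 0 ∨ y = 2) = [0, 0, 2, 2])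
    (h2 : G.filter (fun y => y = 1 ∨ y = 2) = [1, 2, 1, 2]) :
    G.filter (fun y => y = 0 ∨ y = 1) = [0, 0, 1, 1] ∨
    G.filter (fun y => y = 0 ∨ y = 1) = [0, 1, 0, 1] ∨
    G.filter (fun y => y = 0 ∨ y = 1) = [1, 0, 0, 1] := by
  have hlen : G.length = 6 := by
    rw [len3, count_of_pf G _ _ h1 0 (by simp), count_of_pf G _ _ h2 1 (by simp),
      count_of_pf G _ _ h1 2 (by simp)]
    decide
  obtain ⟨x1, x2, x3, x4, x5, x6, rfl⟩ := exists_list6 G hlen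
  clear hlen
  revert h1 h2
  revert x1 x2 x3 x4 x5 x6
  decide

theorem DLC2 (G : List (Fin 3))
    (h1 : G.filter (fun y => y = 0 ∨ y = 2) = [0, 2, 0, 2])
    (h2 : G.filter (fun y => y = 1 ∨ y = 2) = [1, 1, 2, 2]) :
    G.filter (fun y => y = 0 ∨ y = 1) = [0, 1, 1, 0] ∨
    G.filter (fun y => y = 0 ∨ y = 1) = [1, 0, 1, 0] ∨
    G.filter (fun y => y = 0 ∨ y = 1) = [1, 1, 0, 0] := by
  have hlen : G.length = 6 := by
    rw [len3, count_of_pf G _ _ h1 0 (by simp), count_of_pf G _ _ h2 1 (by simp),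
      count_of_pf G _ _ h1 2 (by simp)]
    decide
  obtain ⟨x1, x2, x3, x4, x5, x6, rfl⟩ := exists_list6 G hlen
  clear hlen
  revert h1 h2
  revert x1 x2 x3 x4 x5 x6
  decide

theorem DLC3 (G : List (Fin 3))
    (h1 : G.filter (fun y => y = 0 ∨ y = 2) = [2, 0, 2, 0])
    (h2 : G.filter (fun y => y = 1 ∨ y = 2) = [2, 2, 1, 1]) :
    G.filter (fun y => y = 0 ∨ y = 1) = [0, 0, 1, 1] ∨
    G.filter (fun y => y = 0 ∨ y = 1) = [0, 1, 0, 1] ∨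
    G.filter (fun y => y = 0 ∨ y = 1) = [0, 1, 1, 0] := by
  have hlen : G.length = 6 := by
    rw [len3, count_of_pf G _ _ h1 0 (by simp), count_of_pf G _ _ h2 1 (by simp),
      count_of_pf G _ _ h1 2 (by simp)]
    decide
  obtain ⟨x1, x2, x3, x4, x5, x6, rfl⟩ := exists_list6 G hlen
  clear hlen
  revert h1 h2
  revert x1 x2 x3 x4 x5 x6
  decide

theorem DLC4 (G : List (Fin 3))
    (h1 : G.filter (fun y => y = 0 ∨ y = 2) = [2, 2, 0, 0])
    (h2 : G.filter (fun y => y = 1 ∨ y = 2) = [2, 1, 2, 1]) :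
    G.filter (fun y => y = 0 ∨ y = 1) = [1, 0, 0, 1] ∨
    G.filter (fun y => y = 0 ∨ y = 1) = [1, 0, 1, 0] ∨
    G.filter (fun y => y = 0 ∨ y = 1) = [1, 1, 0, 0] := by
  have hlen : G.length = 6 := by
    rw [len3, count_of_pf G _ _ h1 0 (by simp), count_of_pf G _ _ h2 1 (by simp),
      count_of_pf G _ _ h1 2 (by simp)]
    decide
  obtain ⟨x1, x2, x3, x4, x5, x6, rfl⟩ := exists_list6 G hlen
  clear hlen
  revert h1 h2
  revert x1 x2 x3 x4 x5 x6
  decide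

end S7
namespace S7

theorem fm_pair (c : ℕ → Option ℕ) (x y : ℕ) :
    [x, y].filterMap c = (c x).toList ++ (c y).toList := by
  cases hx : c x <;> cases hy : c y <;>
    simp [List.filterMap_cons, hx, hy]

theorem fm_single (c : ℕ → Option ℕ) (x : ℕ) :
    [x].filterMap c = (c x).toList := by
  cases hx : c x <;> simp [List.filterMap_cons, hx]

theorem filterMap_flatten' (c : ℕ → Option ℕ) (L : List (List ℕ)) :
    L.flatten.filterMap c = (L.map (List.filterMap c)).flatten := by
  induction L with
  | nil => rfl
  | cons l L ih => simp [List.filterMap_append, ih]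

theorem uL_fm (n m : ℕ) (ρ : ℕ → ℕ) (c : ℕ → Option ℕ) :
    (FreeMonoid.toList (hatA n m ρ)).filterMap c =
      ((List.range n).map (fun k => (c (ZL (k + 1))).toList ++ (c (TL (k + 1))).toList)).flatten
      ++ ((List.range (n + m)).map (fun k => (c (ZL (ρ (k + 1)))).toList)).flatten
      ++ ((List.range m).map
            (fun k => (c (TL (n + 1 + k))).toList ++ (c (ZL (n + 1 + k))).toList)).flatten := by
  rw [hatA_toList, List.filterMap_append, List.filterMap_append]
  congr 1
  · congr 1
    · rw [filterMap_flatten', List.map_map]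
      refine congrArg List.flatten (List.map_congr_left ?_)
      intro k _; exact fm_pair c _ _
    · rw [filterMap_flatten', List.map_map]
      refine congrArg List.flatten (List.map_congr_left ?_)
      intro k _; exact fm_single c _
  · rw [filterMap_flatten', List.map_map]
    refine congrArg List.flatten (List.map_congr_left ?_)
    intro k _; exact fm_pair c _ _

@[simp] theorem ZL_inj {a b : ℕ} : ZL a = ZL b ↔ a = b := by
  unfold ZL; exact ⟨fun h => by omega, fun h => by rw [h]⟩
@[simp] theorem TL_inj {a b : ℕ} : TL a = TL b ↔ a = b := by
  unfold TL; exact ⟨fun h => by omega, fun h => by rw [h]⟩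
@[simp] theorem ZL_ne_TL {a b : ℕ} : ZL a = TL b ↔ False := by
  rw [iff_false]; unfold ZL TL; omega
@[simp] theorem TL_ne_ZL {a b : ℕ} : TL a = ZL b ↔ False := by
  rw [iff_false]; unfold ZL TL; omega

end S7
namespace S7

section pieces

variable {c : ℕ → Option ℕ} {n : ℕ} {ρ : ℕ → ℕ}

theorem PV_zero (h : ∀ k, 1 ≤ k → k ≤ n → c (ZL k) = none ∧ c (TL k) = none) :
    ((List.range n).map (fun k => (c (ZL (k + 1))).toList ++ (c (TL (k + 1))).toList)).flatten
      = [] :=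
  flat_zero (fun k hk => by
    rw [(h (k + 1) (by omega) (by omega)).1, (h (k + 1) (by omega) (by omega)).2]; rfl)

theorem PV_one {i : ℕ} (h1 : 1 ≤ i) (h2 : i ≤ n)
    (h : ∀ k, 1 ≤ k → k ≤ n → k ≠ i → c (ZL k) = none ∧ c (TL k) = none) :
    ((List.range n).map (fun k => (c (ZL (k + 1))).toList ++ (c (TL (k + 1))).toList)).flatten
      = (c (ZL i)).toList ++ (c (TL i)).toList := by
  have e : i - 1 + 1 = i := by omega
  have hh := flat_one (g := fun k => (c (ZL (k + 1))).toList ++ (c (TL (k + 1))).toList)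
    (len := n) (i := i - 1) (by omega)
    (fun k hk hne => by
      beta_reduce
      rw [(h (k + 1) (by omega) (by omega) (by omega)).1,
        (h (k + 1) (by omega) (by omega) (by omega)).2]; rfl)
  beta_reduce at hh
  rw [e] at hh; exact hh

theorem PV_two {i j : ℕ} (h1 : 1 ≤ i) (hij : i < j) (h2 : j ≤ n)
    (h : ∀ k, 1 ≤ k → k ≤ n → k ≠ i → k ≠ j → c (ZL k) = none ∧ c (TL k) = none) :
    ((List.range n).map (fun k => (c (ZL (k + 1))).toList ++ (c (TL (k + 1))).toList)).flatten
      = ((c (ZL i)).toList ++ (c (TL i)).toList) ++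
        ((c (ZL j)).toList ++ (c (TL j)).toList) := by
  have ei : i - 1 + 1 = i := by omega
  have ej : j - 1 + 1 = j := by omega
  have hh := flat_two (g := fun k => (c (ZL (k + 1))).toList ++ (c (TL (k + 1))).toList)
    (len := n) (i := i - 1) (j := j - 1) (by omega) (by omega)
    (fun k hk hne1 hne2 => by
      beta_reduce
      rw [(h (k + 1) (by omega) (by omega) (by omega) (by omega)).1,
        (h (k + 1) (by omega) (by omega) (by omega) (by omega)).2]; rfl)
  beta_reduce at hh
  rw [ei, ej] at hh; exact hh

theorem MV_zero {N : ℕ} (h : ∀ k, 1 ≤ k → k ≤ N → c (ZL (ρ k)) = none) :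
    ((List.range N).map (fun k => (c (ZL (ρ (k + 1)))).toList)).flatten = [] :=
  flat_zero (fun k hk => by rw [h (k + 1) (by omega) (by omega)]; rfl)

theorem MV_one {N ki : ℕ} (h1 : 1 ≤ ki) (h2 : ki ≤ N)
    (h : ∀ k, 1 ≤ k → k ≤ N → k ≠ ki → c (ZL (ρ k)) = none) :
    ((List.range N).map (fun k => (c (ZL (ρ (k + 1)))).toList)).flatten
      = (c (ZL (ρ ki))).toList := by
  have e : ki - 1 + 1 = ki := by omega
  have hh := flat_one (g := fun k => (c (ZL (ρ (k + 1)))).toList) (len := N) (i := ki - 1)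
    (by omega)
    (fun k hk hne => by beta_reduce; rw [h (k + 1) (by omega) (by omega) (by omega)]; rfl)
  beta_reduce at hh
  rw [e] at hh; exact hh

theorem MV_two {N ki kj : ℕ} (h1 : 1 ≤ ki) (hij : ki < kj) (h2 : kj ≤ N)
    (h : ∀ k, 1 ≤ k → k ≤ N → k ≠ ki → k ≠ kj → c (ZL (ρ k)) = none) :
    ((List.range N).map (fun k => (c (ZL (ρ (k + 1)))).toList)).flatten
      = (c (ZL (ρ ki))).toList ++ (c (ZL (ρ kj))).toList := by
  have ei : ki - 1 + 1 = ki := by omega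
  have ej : kj - 1 + 1 = kj := by omega
  have hh := flat_two (g := fun k => (c (ZL (ρ (k + 1)))).toList) (len := N) (i := ki - 1)
    (j := kj - 1) (by omega) (by omega)
    (fun k hk hne1 hne2 => by
      beta_reduce
      rw [h (k + 1) (by omega) (by omega) (by omega) (by omega)]; rfl)
  beta_reduce at hh
  rw [ei, ej] at hh; exact hh

theorem SV_zero {n' m' : ℕ}
    (h : ∀ k, n' < k → k ≤ n' + m' → c (TL k) = none ∧ c (ZL k) = none) :
    ((List.range m').map
      (fun k => (c (TL (n' + 1 + k))).toList ++ (c (ZL (n' + 1 + k))).toList)).flatten = [] :=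
  flat_zero (fun k hk => by
    rw [(h (n' + 1 + k) (by omega) (by omega)).1, (h (n' + 1 + k) (by omega) (by omega)).2]
    rfl)

theorem SV_one {n' m' i : ℕ} (h1 : n' < i) (h2 : i ≤ n' + m')
    (h : ∀ k, n' < k → k ≤ n' + m' → k ≠ i → c (TL k) = none ∧ c (ZL k) = none) :
    ((List.range m').map
      (fun k => (c (TL (n' + 1 + k))).toList ++ (c (ZL (n' + 1 + k))).toList)).flatten
      = (c (TL i)).toList ++ (c (ZL i)).toList := by
  have e : n' + 1 + (i - n' - 1) = i := by omega
  have hh := flat_one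
    (g := fun k => (c (TL (n' + 1 + k))).toList ++ (c (ZL (n' + 1 + k))).toList)
    (len := m') (i := i - n' - 1) (by omega)
    (fun k hk hne => by
      beta_reduce
      rw [(h (n' + 1 + k) (by omega) (by omega) (by omega)).1,
        (h (n' + 1 + k) (by omega) (by omega) (by omega)).2]; rfl)
  beta_reduce at hh
  rw [e] at hh; exact hh

theorem SV_two {n' m' i j : ℕ} (h1 : n' < i) (hij : i < j) (h2 : j ≤ n' + m')
    (h : ∀ k, n' < k → k ≤ n' + m' → k ≠ i → k ≠ j → c (TL k) = none ∧ c (ZL k) = none) :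
    ((List.range m').map
      (fun k => (c (TL (n' + 1 + k))).toList ++ (c (ZL (n' + 1 + k))).toList)).flatten
      = ((c (TL i)).toList ++ (c (ZL i)).toList) ++
        ((c (TL j)).toList ++ (c (ZL j)).toList) := by
  have ei : n' + 1 + (i - n' - 1) = i := by omega
  have ej : n' + 1 + (j - n' - 1) = j := by omega
  have hh := flat_two
    (g := fun k => (c (TL (n' + 1 + k))).toList ++ (c (ZL (n' + 1 + k))).toList)
    (len := m') (i := i - n' - 1) (j := j - n' - 1) (by omega) (by omega)
    (fun k hk hne1 hne2 => by
      beta_reduce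
      rw [(h (n' + 1 + k) (by omega) (by omega) (by omega) (by omega)).1,
        (h (n' + 1 + k) (by omega) (by omega) (by omega) (by omega)).2]; rfl)
  beta_reduce at hh
  rw [ei, ej] at hh; exact hh

end pieces

/-! substitutions -/

def cNE (a : ℕ) : ℕ → Option ℕ := fun x => if x = a then some 2 else none
def cZT (i j : ℕ) : ℕ → Option ℕ :=
  fun x => if x = ZL i then some 1 else if x = TL j then some 3 else none
def cTT (i j : ℕ) : ℕ → Option ℕ :=
  fun x => if x = TL i then some 1 else if x = TL j then some 3 else none
def cTZT (j i : ℕ) : ℕ → Option ℕ :=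
  fun x => if x = TL j then some 0 else if x = ZL i then some 1 else
    if x = TL i then some 3 else none
def cZTT (i j : ℕ) : ℕ → Option ℕ :=
  fun x => if x = ZL i then some 0 else if x = TL i then some 2 else
    if x = TL j then some 1 else none
def cQ (i j : ℕ) : ℕ → Option ℕ :=
  fun x => if x = ZL i then some 0 else if x = TL i then some 2 else
    if x = ZL j then some 1 else if x = TL j then some 3 else none
def cZZ (i j : ℕ) : ℕ → Option ℕ :=
  fun x => if x = ZL i then some 0 else if x = ZL j then some 2 else none

end S7
namespace S7

theorem cNE_ne {a x : ℕ} (h : x ≠ a) : cNE a x = none := by simp [cNE, h]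
theorem cZT_z_ne {i j k : ℕ} (h : k ≠ i) : cZT i j (ZL k) = none := by simp [cZT, h]
theorem cZT_t_ne {i j k : ℕ} (h : k ≠ j) : cZT i j (TL k) = none := by simp [cZT, h]
theorem cZT_z_eq {i j : ℕ} : cZT i j (ZL i) = some 1 := by simp [cZT]
theorem cZT_t_eq {i j : ℕ} : cZT i j (TL j) = some 3 := by simp [cZT]
theorem cTT_z {i j k : ℕ} : cTT i j (ZL k) = none := by simp [cTT]
theorem cTT_t_ne {i j k : ℕ} (h1 : k ≠ i) (h2 : k ≠ j) : cTT i j (TL k) = none := by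
  simp [cTT, h1, h2]
theorem cTT_t1 {i j : ℕ} : cTT i j (TL i) = some 1 := by simp [cTT]
theorem cTT_t3 {i j : ℕ} (h : j ≠ i) : cTT i j (TL j) = some 3 := by simp [cTT, h]
theorem cTZT_z_ne {j i k : ℕ} (h : k ≠ i) : cTZT j i (ZL k) = none := by simp [cTZT, h]
theorem cTZT_t_ne {j i k : ℕ} (h1 : k ≠ j) (h2 : k ≠ i) : cTZT j i (TL k) = none := by
  simp [cTZT, h1, h2]
theorem cTZT_z_eq {j i : ℕ} : cTZT j i (ZL i) = some 1 := by simp [cTZT]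
theorem cTZT_t0 {j i : ℕ} : cTZT j i (TL j) = some 0 := by simp [cTZT]
theorem cTZT_t3 {j i : ℕ} (h : i ≠ j) : cTZT j i (TL i) = some 3 := by simp [cTZT, h]
theorem cZTT_z_ne {i j k : ℕ} (h : k ≠ i) : cZTT i j (ZL k) = none := by simp [cZTT, h]
theorem cZTT_z_eq {i j : ℕ} : cZTT i j (ZL i) = some 0 := by simp [cZTT]
theorem cZTT_t_ne {i j k : ℕ} (h1 : k ≠ i) (h2 : k ≠ j) : cZTT i j (TL k) = none := by
  simp [cZTT, h1, h2]
theorem cZTT_t2 {i j : ℕ} : cZTT i j (TL i) = some 2 := by simp [cZTT]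
theorem cZTT_t1 {i j : ℕ} (h : j ≠ i) : cZTT i j (TL j) = some 1 := by simp [cZTT, h]
theorem cQ_z_ne {i j k : ℕ} (h1 : k ≠ i) (h2 : k ≠ j) : cQ i j (ZL k) = none := by
  simp [cQ, h1, h2]
theorem cQ_zi {i j : ℕ} : cQ i j (ZL i) = some 0 := by simp [cQ]
theorem cQ_zj {i j : ℕ} (h : j ≠ i) : cQ i j (ZL j) = some 1 := by simp [cQ, h]
theorem cQ_t_ne {i j k : ℕ} (h1 : k ≠ i) (h2 : k ≠ j) : cQ i j (TL k) = none := by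
  simp [cQ, h1, h2]
theorem cQ_ti {i j : ℕ} : cQ i j (TL i) = some 2 := by simp [cQ]
theorem cQ_tj {i j : ℕ} (h : j ≠ i) : cQ i j (TL j) = some 3 := by simp [cQ, h]
theorem cZZ_z_ne {i j k : ℕ} (h1 : k ≠ i) (h2 : k ≠ j) : cZZ i j (ZL k) = none := by
  simp [cZZ, h1, h2]
theorem cZZ_zi {i j : ℕ} : cZZ i j (ZL i) = some 0 := by simp [cZZ]
theorem cZZ_zj {i j : ℕ} (h : j ≠ i) : cZZ i j (ZL j) = some 2 := by simp [cZZ, h]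
theorem cZZ_t {i j k : ℕ} : cZZ i j (TL k) = none := by simp [cZZ]

end S7
namespace S7

section comps

variable {n m : ℕ} {ρ : ℕ → ℕ}

/-- `ρ k ≠ i` helper -/
theorem rho_ne
    (hinj : ∀ k k', 1 ≤ k → k ≤ n + m → 1 ≤ k' → k' ≤ n + m → ρ k = ρ k' → k = k')
    {k ki i : ℕ} (hk : 1 ≤ k) (hk' : k ≤ n + m) (hki1 : 1 ≤ ki) (hki2 : ki ≤ n + m)
    (hki3 : ρ ki = i) (hne : k ≠ ki) : ρ k ≠ i :=
  fun hh => hne (hinj k ki hk hk' hki1 hki2 (by rw [hh, hki3]))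

theorem comp_ne {a : ℕ} (hmap : ∀ k, 1 ≤ k → k ≤ n + m → 1 ≤ ρ k ∧ ρ k ≤ n + m)
    (ha : ∀ k, 1 ≤ k → k ≤ n + m → a ≠ ZL k ∧ a ≠ TL k) :
    (FreeMonoid.toList (hatA n m ρ)).filterMap (cNE a) = [] := by
  rw [uL_fm,
    PV_zero (fun k h1 h2 => ⟨cNE_ne (Ne.symm (ha k (by omega) (by omega)).1),
      cNE_ne (Ne.symm (ha k (by omega) (by omega)).2)⟩),
    MV_zero (fun k h1 h2 =>
      cNE_ne (Ne.symm (ha (ρ k) (hmap k h1 h2).1 (hmap k h1 h2).2).1)),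
    SV_zero (fun k h1 h2 => ⟨cNE_ne (Ne.symm (ha k (by omega) (by omega)).2),
      cNE_ne (Ne.symm (ha k (by omega) (by omega)).1)⟩)]
  rfl

theorem comp_zt_ll {i j ki : ℕ} (h1 : 1 ≤ i) (h2 : i ≤ j) (h3 : j ≤ n)
    (hk1 : 1 ≤ ki) (hk2 : ki ≤ n + m) (hk3 : ρ ki = i)
    (hinj : ∀ k k', 1 ≤ k → k ≤ n + m → 1 ≤ k' → k' ≤ n + m → ρ k = ρ k' → k = k') :
    (FreeMonoid.toList (hatA n m ρ)).filterMap (cZT i j) = [1, 3, 1] := by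
  rw [uL_fm]
  have hmv := MV_one (c := cZT i j) (ρ := ρ) hk1 hk2 (fun k ha hb hne =>
    cZT_z_ne (rho_ne hinj ha hb hk1 hk2 hk3 hne))
  have hsv := SV_zero (c := cZT i j) (n' := n) (m' := m) (fun k ha hb =>
    ⟨cZT_t_ne (by omega), cZT_z_ne (by omega)⟩)
  rcases eq_or_lt_of_le h2 with he | hlt
  · subst he
    rw [PV_one h1 h3 (fun k ha hb hne => ⟨cZT_z_ne (by omega), cZT_t_ne (by omega)⟩),
      hmv, hsv, hk3, cZT_z_eq, cZT_t_eq]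
    rfl
  · rw [PV_two h1 hlt h3
        (fun k ha hb hne1 hne2 => ⟨cZT_z_ne (by omega), cZT_t_ne (by omega)⟩),
      hmv, hsv, hk3, cZT_z_eq, cZT_t_eq, cZT_z_ne (by omega : j ≠ i),
      cZT_t_ne (by omega : i ≠ j)]
    rfl

theorem comp_zt_hh {i j ki : ℕ} (h1 : n < j) (h2 : j ≤ i) (h3 : i ≤ n + m)
    (hk1 : 1 ≤ ki) (hk2 : ki ≤ n + m) (hk3 : ρ ki = i)
    (hinj : ∀ k k', 1 ≤ k → k ≤ n + m → 1 ≤ k' → k' ≤ n + m → ρ k = ρ k' → k = k') :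
    (FreeMonoid.toList (hatA n m ρ)).filterMap (cZT i j) = [1, 3, 1] := by
  rw [uL_fm]
  have hmv := MV_one (c := cZT i j) (ρ := ρ) hk1 hk2 (fun k ha hb hne =>
    cZT_z_ne (rho_ne hinj ha hb hk1 hk2 hk3 hne))
  have hpv := PV_zero (c := cZT i j) (n := n) (fun k ha hb =>
    ⟨cZT_z_ne (by omega), cZT_t_ne (by omega)⟩)
  rcases eq_or_lt_of_le h2 with he | hlt
  · subst he
    rw [hpv, hmv, hk3,
      SV_one h1 h3 (fun k ha hb hne => ⟨cZT_t_ne (by omega), cZT_z_ne (by omega)⟩),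
      cZT_z_eq, cZT_t_eq]
    rfl
  · rw [hpv, hmv, hk3,
      SV_two h1 hlt h3 (fun k ha hb hne1 hne2 => ⟨cZT_t_ne (by omega), cZT_z_ne (by omega)⟩),
      cZT_z_eq, cZT_t_eq, cZT_z_ne (by omega : j ≠ i), cZT_t_ne (by omega : i ≠ j)]
    rfl

theorem comp_tt_ll {i j : ℕ} (h1 : 1 ≤ i) (h2 : i < j) (h3 : j ≤ n) :
    (FreeMonoid.toList (hatA n m ρ)).filterMap (cTT i j) = [1, 3] := by
  rw [uL_fm,
    PV_two h1 h2 h3 (fun k ha hb hne1 hne2 => ⟨cTT_z, cTT_t_ne (by omega) (by omega)⟩),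
    MV_zero (fun k ha hb => cTT_z),
    SV_zero (fun k ha hb => ⟨cTT_t_ne (by omega) (by omega), cTT_z⟩),
    cTT_t1, cTT_t3 (by omega : j ≠ i), cTT_z, cTT_z]
  rfl

theorem comp_tt_lh {i j : ℕ} (h1 : 1 ≤ i) (h2 : i ≤ n) (h3 : n < j) (h4 : j ≤ n + m) :
    (FreeMonoid.toList (hatA n m ρ)).filterMap (cTT i j) = [1, 3] := by
  rw [uL_fm,
    PV_one h1 h2 (fun k ha hb hne => ⟨cTT_z, cTT_t_ne (by omega) (by omega)⟩),
    MV_zero (fun k ha hb => cTT_z),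
    SV_one h3 h4 (fun k ha hb hne => ⟨cTT_t_ne (by omega) (by omega), cTT_z⟩),
    cTT_t1, cTT_t3 (by omega : j ≠ i), cTT_z, cTT_z]
  rfl

theorem comp_tt_hh {i j : ℕ} (h1 : n < i) (h2 : i < j) (h3 : j ≤ n + m) :
    (FreeMonoid.toList (hatA n m ρ)).filterMap (cTT i j) = [1, 3] := by
  rw [uL_fm,
    PV_zero (fun k ha hb => ⟨cTT_z, cTT_t_ne (by omega) (by omega)⟩),
    MV_zero (fun k ha hb => cTT_z),
    SV_two h1 h2 h3 (fun k ha hb hne1 hne2 => ⟨cTT_t_ne (by omega) (by omega), cTT_z⟩),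
    cTT_t1, cTT_t3 (by omega : j ≠ i), cTT_z, cTT_z]
  rfl

theorem comp_tzt_l {j i ki : ℕ} (h1 : 1 ≤ j) (h2 : j < i) (h3 : i ≤ n)
    (hk1 : 1 ≤ ki) (hk2 : ki ≤ n + m) (hk3 : ρ ki = i)
    (hinj : ∀ k k', 1 ≤ k → k ≤ n + m → 1 ≤ k' → k' ≤ n + m → ρ k = ρ k' → k = k') :
    (FreeMonoid.toList (hatA n m ρ)).filterMap (cTZT j i) = [0, 1, 3, 1] := by
  rw [uL_fm,
    PV_two h1 h2 h3
      (fun k ha hb hne1 hne2 => ⟨cTZT_z_ne (by omega), cTZT_t_ne (by omega) (by omega)⟩),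
    MV_one hk1 hk2 (fun k ha hb hne => cTZT_z_ne (rho_ne hinj ha hb hk1 hk2 hk3 hne)),
    SV_zero (fun k ha hb => ⟨cTZT_t_ne (by omega) (by omega), cTZT_z_ne (by omega)⟩),
    hk3, cTZT_z_eq, cTZT_t0, cTZT_t3 (by omega : i ≠ j), cTZT_z_ne (by omega : j ≠ i)]
  rfl

theorem comp_tzt_h {j i ki : ℕ} (h1 : 1 ≤ j) (h2 : j ≤ n) (h3 : n < i) (h4 : i ≤ n + m)
    (hk1 : 1 ≤ ki) (hk2 : ki ≤ n + m) (hk3 : ρ ki = i)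
    (hinj : ∀ k k', 1 ≤ k → k ≤ n + m → 1 ≤ k' → k' ≤ n + m → ρ k = ρ k' → k = k') :
    (FreeMonoid.toList (hatA n m ρ)).filterMap (cTZT j i) = [0, 1, 3, 1] := by
  rw [uL_fm,
    PV_one h1 h2 (fun k ha hb hne => ⟨cTZT_z_ne (by omega), cTZT_t_ne (by omega) (by omega)⟩),
    MV_one hk1 hk2 (fun k ha hb hne => cTZT_z_ne (rho_ne hinj ha hb hk1 hk2 hk3 hne)),
    SV_one h3 h4
      (fun k ha hb hne => ⟨cTZT_t_ne (by omega) (by omega), cTZT_z_ne (by omega)⟩),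
    hk3, cTZT_z_eq, cTZT_t0, cTZT_t3 (by omega : i ≠ j), cTZT_z_ne (by omega : j ≠ i)]
  rfl

theorem comp_ztt_lh {i j ki : ℕ} (h1 : 1 ≤ i) (h2 : i ≤ n) (h3 : n < j) (h4 : j ≤ n + m)
    (hk1 : 1 ≤ ki) (hk2 : ki ≤ n + m) (hk3 : ρ ki = i)
    (hinj : ∀ k k', 1 ≤ k → k ≤ n + m → 1 ≤ k' → k' ≤ n + m → ρ k = ρ k' → k = k') :
    (FreeMonoid.toList (hatA n m ρ)).filterMap (cZTT i j) = [0, 2, 0, 1] := by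
  rw [uL_fm,
    PV_one h1 h2 (fun k ha hb hne => ⟨cZTT_z_ne (by omega), cZTT_t_ne (by omega) (by omega)⟩),
    MV_one hk1 hk2 (fun k ha hb hne => cZTT_z_ne (rho_ne hinj ha hb hk1 hk2 hk3 hne)),
    SV_one h3 h4
      (fun k ha hb hne => ⟨cZTT_t_ne (by omega) (by omega), cZTT_z_ne (by omega)⟩),
    hk3, cZTT_z_eq, cZTT_t2, cZTT_t1 (by omega : j ≠ i), cZTT_z_ne (by omega : j ≠ i)]
  rfl

theorem comp_ztt_hh {i j ki : ℕ} (h1 : n < i) (h2 : i < j) (h3 : j ≤ n + m)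
    (hk1 : 1 ≤ ki) (hk2 : ki ≤ n + m) (hk3 : ρ ki = i)
    (hinj : ∀ k k', 1 ≤ k → k ≤ n + m → 1 ≤ k' → k' ≤ n + m → ρ k = ρ k' → k = k') :
    (FreeMonoid.toList (hatA n m ρ)).filterMap (cZTT i j) = [0, 2, 0, 1] := by
  rw [uL_fm,
    PV_zero (fun k ha hb => ⟨cZTT_z_ne (by omega), cZTT_t_ne (by omega) (by omega)⟩),
    MV_one hk1 hk2 (fun k ha hb hne => cZTT_z_ne (rho_ne hinj ha hb hk1 hk2 hk3 hne)),
    SV_two h1 h2 h3 (fun k ha hb hne1 hne2 =>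
      ⟨cZTT_t_ne (by omega) (by omega), cZTT_z_ne (by omega)⟩),
    hk3, cZTT_z_eq, cZTT_t2, cZTT_t1 (by omega : j ≠ i), cZTT_z_ne (by omega : j ≠ i)]
  rfl

theorem comp_q_lt {i j ki kj : ℕ} (h1 : 1 ≤ i) (h2 : i ≤ n) (h3 : n < j) (h4 : j ≤ n + m)
    (hk1 : 1 ≤ ki) (hk2 : ki ≤ n + m) (hk3 : ρ ki = i)
    (hl1 : 1 ≤ kj) (hl2 : kj ≤ n + m) (hl3 : ρ kj = j) (hord : ki < kj)
    (hinj : ∀ k k', 1 ≤ k → k ≤ n + m → 1 ≤ k' → k' ≤ n + m → ρ k = ρ k' → k = k') :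
    (FreeMonoid.toList (hatA n m ρ)).filterMap (cQ i j) = [0, 2, 0, 1, 3, 1] := by
  rw [uL_fm,
    PV_one h1 h2 (fun k ha hb hne =>
      ⟨cQ_z_ne (by omega) (by omega), cQ_t_ne (by omega) (by omega)⟩),
    MV_two hk1 hord hl2 (fun k ha hb hne1 hne2 =>
      cQ_z_ne (rho_ne hinj ha hb hk1 hk2 hk3 hne1) (rho_ne hinj ha hb hl1 hl2 hl3 hne2)),
    SV_one h3 h4 (fun k ha hb hne =>
      ⟨cQ_t_ne (by omega) (by omega), cQ_z_ne (by omega) (by omega)⟩),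
    hk3, hl3, cQ_zi, cQ_ti, cQ_zj (by omega : j ≠ i), cQ_tj (by omega : j ≠ i)]
  rfl

theorem comp_q_gt {i j ki kj : ℕ} (h1 : 1 ≤ i) (h2 : i ≤ n) (h3 : n < j) (h4 : j ≤ n + m)
    (hk1 : 1 ≤ ki) (hk2 : ki ≤ n + m) (hk3 : ρ ki = i)
    (hl1 : 1 ≤ kj) (hl2 : kj ≤ n + m) (hl3 : ρ kj = j) (hord : kj < ki)
    (hinj : ∀ k k', 1 ≤ k → k ≤ n + m → 1 ≤ k' → k' ≤ n + m → ρ k = ρ k' → k = k') :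
    (FreeMonoid.toList (hatA n m ρ)).filterMap (cQ i j) = [0, 2, 1, 0, 3, 1] := by
  rw [uL_fm,
    PV_one h1 h2 (fun k ha hb hne =>
      ⟨cQ_z_ne (by omega) (by omega), cQ_t_ne (by omega) (by omega)⟩),
    MV_two hl1 hord hk2 (fun k ha hb hne1 hne2 =>
      cQ_z_ne (rho_ne hinj ha hb hk1 hk2 hk3 hne2) (rho_ne hinj ha hb hl1 hl2 hl3 hne1)),
    SV_one h3 h4 (fun k ha hb hne =>
      ⟨cQ_t_ne (by omega) (by omega), cQ_z_ne (by omega) (by omega)⟩),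
    hk3, hl3, cQ_zi, cQ_ti, cQ_zj (by omega : j ≠ i), cQ_tj (by omega : j ≠ i)]
  rfl

theorem comp_zz_ll_lt {i j ki kj : ℕ} (h1 : 1 ≤ i) (h2 : i < j) (h3 : j ≤ n)
    (hk1 : 1 ≤ ki) (hk2 : ki ≤ n + m) (hk3 : ρ ki = i)
    (hl1 : 1 ≤ kj) (hl2 : kj ≤ n + m) (hl3 : ρ kj = j) (hord : ki < kj)
    (hinj : ∀ k k', 1 ≤ k → k ≤ n + m → 1 ≤ k' → k' ≤ n + m → ρ k = ρ k' → k = k') :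
    (FreeMonoid.toList (hatA n m ρ)).filterMap (cZZ i j) = [0, 2, 0, 2] := by
  rw [uL_fm,
    PV_two h1 h2 h3 (fun k ha hb hne1 hne2 => ⟨cZZ_z_ne (by omega) (by omega), cZZ_t⟩),
    MV_two hk1 hord hl2 (fun k ha hb hne1 hne2 =>
      cZZ_z_ne (rho_ne hinj ha hb hk1 hk2 hk3 hne1) (rho_ne hinj ha hb hl1 hl2 hl3 hne2)),
    SV_zero (fun k ha hb => ⟨cZZ_t, cZZ_z_ne (by omega) (by omega)⟩),
    hk3, hl3, cZZ_zi, cZZ_zj (by omega : j ≠ i), cZZ_t, cZZ_t]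
  rfl

theorem comp_zz_ll_gt {i j ki kj : ℕ} (h1 : 1 ≤ i) (h2 : i < j) (h3 : j ≤ n)
    (hk1 : 1 ≤ ki) (hk2 : ki ≤ n + m) (hk3 : ρ ki = i)
    (hl1 : 1 ≤ kj) (hl2 : kj ≤ n + m) (hl3 : ρ kj = j) (hord : kj < ki)
    (hinj : ∀ k k', 1 ≤ k → k ≤ n + m → 1 ≤ k' → k' ≤ n + m → ρ k = ρ k' → k = k') :
    (FreeMonoid.toList (hatA n m ρ)).filterMap (cZZ i j) = [0, 2, 2, 0] := by
  rw [uL_fm,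
    PV_two h1 h2 h3 (fun k ha hb hne1 hne2 => ⟨cZZ_z_ne (by omega) (by omega), cZZ_t⟩),
    MV_two hl1 hord hk2 (fun k ha hb hne1 hne2 =>
      cZZ_z_ne (rho_ne hinj ha hb hk1 hk2 hk3 hne2) (rho_ne hinj ha hb hl1 hl2 hl3 hne1)),
    SV_zero (fun k ha hb => ⟨cZZ_t, cZZ_z_ne (by omega) (by omega)⟩),
    hk3, hl3, cZZ_zi, cZZ_zj (by omega : j ≠ i), cZZ_t, cZZ_t]
  rfl

theorem comp_zz_hh_lt {i j ki kj : ℕ} (h1 : n < i) (h2 : i < j) (h3 : j ≤ n + m)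
    (hk1 : 1 ≤ ki) (hk2 : ki ≤ n + m) (hk3 : ρ ki = i)
    (hl1 : 1 ≤ kj) (hl2 : kj ≤ n + m) (hl3 : ρ kj = j) (hord : ki < kj)
    (hinj : ∀ k k', 1 ≤ k → k ≤ n + m → 1 ≤ k' → k' ≤ n + m → ρ k = ρ k' → k = k') :
    (FreeMonoid.toList (hatA n m ρ)).filterMap (cZZ i j) = [0, 2, 0, 2] := by
  rw [uL_fm,
    PV_zero (fun k ha hb => ⟨cZZ_z_ne (by omega) (by omega), cZZ_t⟩),
    MV_two hk1 hord hl2 (fun k ha hb hne1 hne2 =>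
      cZZ_z_ne (rho_ne hinj ha hb hk1 hk2 hk3 hne1) (rho_ne hinj ha hb hl1 hl2 hl3 hne2)),
    SV_two h1 h2 h3 (fun k ha hb hne1 hne2 => ⟨cZZ_t, cZZ_z_ne (by omega) (by omega)⟩),
    hk3, hl3, cZZ_zi, cZZ_zj (by omega : j ≠ i), cZZ_t, cZZ_t]
  rfl

theorem comp_zz_hh_gt {i j ki kj : ℕ} (h1 : n < i) (h2 : i < j) (h3 : j ≤ n + m)
    (hk1 : 1 ≤ ki) (hk2 : ki ≤ n + m) (hk3 : ρ ki = i)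
    (hl1 : 1 ≤ kj) (hl2 : kj ≤ n + m) (hl3 : ρ kj = j) (hord : kj < ki)
    (hinj : ∀ k k', 1 ≤ k → k ≤ n + m → 1 ≤ k' → k' ≤ n + m → ρ k = ρ k' → k = k') :
    (FreeMonoid.toList (hatA n m ρ)).filterMap (cZZ i j) = [2, 0, 0, 2] := by
  rw [uL_fm,
    PV_zero (fun k ha hb => ⟨cZZ_z_ne (by omega) (by omega), cZZ_t⟩),
    MV_two hl1 hord hk2 (fun k ha hb hne1 hne2 =>
      cZZ_z_ne (rho_ne hinj ha hb hk1 hk2 hk3 hne2) (rho_ne hinj ha hb hl1 hl2 hl3 hne1)),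
    SV_two h1 h2 h3 (fun k ha hb hne1 hne2 => ⟨cZZ_t, cZZ_z_ne (by omega) (by omega)⟩),
    hk3, hl3, cZZ_zi, cZZ_zj (by omega : j ≠ i), cZZ_t, cZZ_t]
  rfl

theorem comp_zz_lh_lt {i j ki kj : ℕ} (h1 : 1 ≤ i) (h2 : i ≤ n) (h3 : n < j) (h4 : j ≤ n + m)
    (hk1 : 1 ≤ ki) (hk2 : ki ≤ n + m) (hk3 : ρ ki = i)
    (hl1 : 1 ≤ kj) (hl2 : kj ≤ n + m) (hl3 : ρ kj = j) (hord : ki < kj)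
    (hinj : ∀ k k', 1 ≤ k → k ≤ n + m → 1 ≤ k' → k' ≤ n + m → ρ k = ρ k' → k = k') :
    (FreeMonoid.toList (hatA n m ρ)).filterMap (cZZ i j) = [0, 0, 2, 2] := by
  rw [uL_fm,
    PV_one h1 h2 (fun k ha hb hne => ⟨cZZ_z_ne (by omega) (by omega), cZZ_t⟩),
    MV_two hk1 hord hl2 (fun k ha hb hne1 hne2 =>
      cZZ_z_ne (rho_ne hinj ha hb hk1 hk2 hk3 hne1) (rho_ne hinj ha hb hl1 hl2 hl3 hne2)),
    SV_one h3 h4 (fun k ha hb hne => ⟨cZZ_t, cZZ_z_ne (by omega) (by omega)⟩),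
    hk3, hl3, cZZ_zi, cZZ_zj (by omega : j ≠ i), cZZ_t, cZZ_t]
  rfl

theorem comp_zz_lh_gt {i j ki kj : ℕ} (h1 : 1 ≤ i) (h2 : i ≤ n) (h3 : n < j) (h4 : j ≤ n + m)
    (hk1 : 1 ≤ ki) (hk2 : ki ≤ n + m) (hk3 : ρ ki = i)
    (hl1 : 1 ≤ kj) (hl2 : kj ≤ n + m) (hl3 : ρ kj = j) (hord : kj < ki)
    (hinj : ∀ k k', 1 ≤ k → k ≤ n + m → 1 ≤ k' → k' ≤ n + m → ρ k = ρ k' → k = k') :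
    (FreeMonoid.toList (hatA n m ρ)).filterMap (cZZ i j) = [0, 2, 0, 2] := by
  rw [uL_fm,
    PV_one h1 h2 (fun k ha hb hne => ⟨cZZ_z_ne (by omega) (by omega), cZZ_t⟩),
    MV_two hl1 hord hk2 (fun k ha hb hne1 hne2 =>
      cZZ_z_ne (rho_ne hinj ha hb hk1 hk2 hk3 hne2) (rho_ne hinj ha hb hl1 hl2 hl3 hne1)),
    SV_one h3 h4 (fun k ha hb hne => ⟨cZZ_t, cZZ_z_ne (by omega) (by omega)⟩),
    hk3, hl3, cZZ_zi, cZZ_zj (by omega : j ≠ i), cZZ_t, cZZ_t]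
  rfl

end comps

end S7
namespace S7

theorem pf2_of_filter {l L : List ℕ} {p : ℕ → Bool} {a b : ℕ}
    (h : l.filter p = L) (hab : ∀ x, (x = a ∨ x = b) → p x = true) :
    pf2 a b l = L.filter (fun x => x = a ∨ x = b) := by
  rw [← h, pf2, List.filter_filter]
  apply List.filter_congr; intro x _
  by_cases hx : x = a ∨ x = b
  · simp [hx, hab x hx]
  · simp [hx]

theorem pf1_of_filter {l L : List ℕ} {p : ℕ → Bool} {a : ℕ}
    (h : l.filter p = L) (ha : p a = true) :
    l.filter (fun x => x = a) = L.filter (fun x => x = a) := by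
  rw [← h, List.filter_filter]
  apply List.filter_congr; intro x _
  by_cases hx : x = a
  · subst hx; simp [ha]
  · simp [hx]

theorem pf2_notmem {l : List ℕ} {a b : ℕ} (hb : b ∉ l) :
    pf2 a b l = l.filter (fun x => x = a) := by
  apply List.filter_congr; intro x hx
  have : x ≠ b := fun hh => hb (hh ▸ hx)
  simp [this]

theorem pf2_nil {l : List ℕ} {a b : ℕ} (ha : a ∉ l) (hb : b ∉ l) :
    pf2 a b l = [] := by
  rw [pf2, List.filter_eq_nil_iff]
  intro x hx
  have h1 : x ≠ a := fun hh => ha (hh ▸ hx)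
  have h2 : x ≠ b := fun hh => hb (hh ▸ hx)
  simp [h1, h2]

theorem notmem_of_fm {l : List ℕ} {a : ℕ} (h : l.filterMap (cNE a) = []) : a ∉ l := by
  intro hmem
  have h2 := (List.filterMap_eq_nil_iff.mp h) a hmem
  simp [cNE] at h2

/-! fact wrappers -/

theorem pfact_zt {l : List ℕ} {i j : ℕ} (h : l.filterMap (cZT i j) = [1, 3, 1]) :
    pf2 (ZL i) (TL j) l = [ZL i, TL j, ZL i] := by
  have hdom : ∀ x, (decide (x = ZL i ∨ x = TL j)) = (cZT i j x).isSome := by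
    intro x; unfold cZT; split_ifs <;> simp [*]
  have hd : ∀ x y, cZT i j x = some y →
      (fun y => if y = 1 then ZL i else TL j) y = x := by
    intro x y hxy; unfold cZT at hxy
    split_ifs at hxy with h1 h2 <;>
      first
        | exact Option.noConfusion hxy
        | (obtain rfl := Option.some.inj hxy; simp_all)
  calc pf2 (ZL i) (TL j) l = l.filter (fun x => (cZT i j x).isSome) :=
        List.filter_congr (fun x _ => hdom x)
    _ = [(1:ℕ), 3, 1].map (fun y => if y = 1 then ZL i else TL j) := by
        rw [filter_isSome_eq _ _ hd, h]
    _ = [ZL i, TL j, ZL i] := rfl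

theorem pfact_tt {l : List ℕ} {i j : ℕ} (h : l.filterMap (cTT i j) = [1, 3]) :
    pf2 (TL i) (TL j) l = [TL i, TL j] := by
  have hdom : ∀ x, (decide (x = TL i ∨ x = TL j)) = (cTT i j x).isSome := by
    intro x; unfold cTT; split_ifs <;> simp [*]
  have hd : ∀ x y, cTT i j x = some y →
      (fun y => if y = 1 then TL i else TL j) y = x := by
    intro x y hxy; unfold cTT at hxy
    split_ifs at hxy with h1 h2 <;>
      first
        | exact Option.noConfusion hxy
        | (obtain rfl := Option.some.inj hxy; simp_all)
  calc pf2 (TL i) (TL j) l = l.filter (fun x => (cTT i j x).isSome) :=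
        List.filter_congr (fun x _ => hdom x)
    _ = [(1:ℕ), 3].map (fun y => if y = 1 then TL i else TL j) := by
        rw [filter_isSome_eq _ _ hd, h]
    _ = [TL i, TL j] := rfl

theorem pfact_tzt {l : List ℕ} {j i : ℕ} (h : l.filterMap (cTZT j i) = [0, 1, 3, 1]) :
    l.filter (fun x => x = TL j ∨ x = ZL i ∨ x = TL i) = [TL j, ZL i, TL i, ZL i] := by
  have hdom : ∀ x, (decide (x = TL j ∨ x = ZL i ∨ x = TL i)) = (cTZT j i x).isSome := by
    intro x; unfold cTZT; split_ifs <;> simp [*]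
  have hd : ∀ x y, cTZT j i x = some y →
      (fun y => if y = 0 then TL j else if y = 1 then ZL i else TL i) y = x := by
    intro x y hxy; unfold cTZT at hxy
    split_ifs at hxy with h1 h2 h3 <;>
      first
        | exact Option.noConfusion hxy
        | (obtain rfl := Option.some.inj hxy; simp_all)
  calc l.filter (fun x => x = TL j ∨ x = ZL i ∨ x = TL i)
      = l.filter (fun x => (cTZT j i x).isSome) := List.filter_congr (fun x _ => hdom x)
    _ = [(0:ℕ), 1, 3, 1].map
          (fun y => if y = 0 then TL j else if y = 1 then ZL i else TL i) := by
        rw [filter_isSome_eq _ _ hd, h]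
    _ = [TL j, ZL i, TL i, ZL i] := rfl

theorem pfact_ztt {l : List ℕ} {i j : ℕ} (h : l.filterMap (cZTT i j) = [0, 2, 0, 1]) :
    l.filter (fun x => x = ZL i ∨ x = TL i ∨ x = TL j) = [ZL i, TL i, ZL i, TL j] := by
  have hdom : ∀ x, (decide (x = ZL i ∨ x = TL i ∨ x = TL j)) = (cZTT i j x).isSome := by
    intro x; unfold cZTT; split_ifs <;> simp [*]
  have hd : ∀ x y, cZTT i j x = some y →
      (fun y => if y = 0 then ZL i else if y = 2 then TL i else TL j) y = x := by
    intro x y hxy; unfold cZTT at hxy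
    split_ifs at hxy with h1 h2 h3 <;>
      first
        | exact Option.noConfusion hxy
        | (obtain rfl := Option.some.inj hxy; simp_all)
  calc l.filter (fun x => x = ZL i ∨ x = TL i ∨ x = TL j)
      = l.filter (fun x => (cZTT i j x).isSome) := List.filter_congr (fun x _ => hdom x)
    _ = [(0:ℕ), 2, 0, 1].map
          (fun y => if y = 0 then ZL i else if y = 2 then TL i else TL j) := by
        rw [filter_isSome_eq _ _ hd, h]
    _ = [ZL i, TL i, ZL i, TL j] := rfl

theorem pfact_q {l : List ℕ} {i j : ℕ} (h : l.filterMap (cQ i j) = [0, 2, 0, 1, 3, 1]) :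
    l.filter (fun x => x = ZL i ∨ x = TL i ∨ x = ZL j ∨ x = TL j)
      = [ZL i, TL i, ZL i, ZL j, TL j, ZL j] := by
  have hdom : ∀ x, (decide (x = ZL i ∨ x = TL i ∨ x = ZL j ∨ x = TL j))
      = (cQ i j x).isSome := by
    intro x; unfold cQ; split_ifs <;> simp [*]
  have hd : ∀ x y, cQ i j x = some y →
      (fun y => if y = 0 then ZL i else if y = 2 then TL i else
        if y = 1 then ZL j else TL j) y = x := by
    intro x y hxy; unfold cQ at hxy
    split_ifs at hxy with h1 h2 h3 h4 <;>
      first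
        | exact Option.noConfusion hxy
        | (obtain rfl := Option.some.inj hxy; simp_all)
  calc l.filter (fun x => x = ZL i ∨ x = TL i ∨ x = ZL j ∨ x = TL j)
      = l.filter (fun x => (cQ i j x).isSome) := List.filter_congr (fun x _ => hdom x)
    _ = [(0:ℕ), 2, 0, 1, 3, 1].map (fun y => if y = 0 then ZL i else if y = 2 then TL i
          else if y = 1 then ZL j else TL j) := by
        rw [filter_isSome_eq _ _ hd, h]
    _ = [ZL i, TL i, ZL i, ZL j, TL j, ZL j] := rfl

theorem pfact_zz {l : List ℕ} {i j : ℕ} {L : List ℕ} (h : l.filterMap (cZZ i j) = L) :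
    pf2 (ZL i) (ZL j) l = L.map (fun y => if y = 0 then ZL i else ZL j) := by
  have hdom : ∀ x, (decide (x = ZL i ∨ x = ZL j)) = (cZZ i j x).isSome := by
    intro x; unfold cZZ; split_ifs <;> simp [*]
  have hd : ∀ x y, cZZ i j x = some y →
      (fun y => if y = 0 then ZL i else ZL j) y = x := by
    intro x y hxy; unfold cZZ at hxy
    split_ifs at hxy with h1 h2 <;>
      first
        | exact Option.noConfusion hxy
        | (obtain rfl := Option.some.inj hxy; simp_all)
  calc pf2 (ZL i) (ZL j) l = l.filter (fun x => (cZZ i j x).isSome) :=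
        List.filter_congr (fun x _ => hdom x)
    _ = L.map (fun y => if y = 0 then ZL i else ZL j) := by
        rw [filter_isSome_eq _ _ hd, h]

theorem fm_via_filter {l F : List ℕ} {c : ℕ → Option ℕ} {p : ℕ → Bool}
    (hdom : ∀ x, p x = (c x).isSome) (hF : l.filter p = F) :
    l.filterMap c = F.filterMap c := by
  rw [filterMap_eq_filterMap_filter c l, ← List.filter_congr (fun x _ => hdom x), hF]

/-! intermediate position existence -/

theorem step_mid {n m : ℕ} {ρ : ℕ → ℕ}
    (hmap : ∀ k, 1 ≤ k → k ≤ n + m → 1 ≤ ρ k ∧ ρ k ≤ n + m)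
    (halt : ∀ i, 1 ≤ i → i < n + m →
      ((1 ≤ ρ i ∧ ρ i ≤ n) ↔ ¬(1 ≤ ρ (i + 1) ∧ ρ (i + 1) ≤ n)))
    {i j ki kj : ℕ} (hlow : i ≤ n ↔ j ≤ n)
    (hk1 : 1 ≤ ki) (hk2 : ki ≤ n + m) (hk3 : ρ ki = i)
    (hl1 : 1 ≤ kj) (hl2 : kj ≤ n + m) (hl3 : ρ kj = j) (hord : ki < kj) :
    ∃ kh, 1 ≤ kh ∧ kh ≤ n + m ∧ ki < kh ∧ kh < kj ∧
      (i ≤ n → n < ρ kh) ∧ (n < i → ρ kh ≤ n) := by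
  have hki : 1 ≤ i := hk3 ▸ (hmap ki hk1 hk2).1
  have hkj1 : 1 ≤ j := hl3 ▸ (hmap kj hl1 hl2).1
  have hstep := halt ki hk1 (by omega)
  rw [hk3] at hstep
  have hmapk := hmap (ki + 1) (by omega) (by omega)
  have hne : ki + 1 ≠ kj := by
    intro he
    have hj : ρ (ki + 1) = j := by rw [he, hl3]
    rw [hj] at hstep
    by_cases hc : i ≤ n
    · exact (hstep.mp ⟨hki, hc⟩) ⟨hkj1, hlow.mp hc⟩
    · exact hc (hstep.mpr (fun hB => hc (hlow.mpr hB.2))).2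
  refine ⟨ki + 1, by omega, by omega, by omega, by omega, ?_, ?_⟩
  · intro hc
    have h2 := hstep.mp ⟨hki, hc⟩
    omega
  · intro hc
    by_contra hcon
    have h2 := hstep.mpr (by omega)
    omega

theorem letter_cases (N a : ℕ) :
    (∃ i, 1 ≤ i ∧ i ≤ N ∧ a = ZL i) ∨ (∃ i, 1 ≤ i ∧ i ≤ N ∧ a = TL i) ∨
      (∀ i, 1 ≤ i → i ≤ N → a ≠ ZL i ∧ a ≠ TL i) := by
  by_cases h1 : 12 ≤ a ∧ a ≤ 2 * N + 11
  · rcases Nat.even_or_odd a with he | ho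
    · obtain ⟨r, hr⟩ := he
      left; exact ⟨r - 5, by omega, by omega, by unfold ZL; omega⟩
    · obtain ⟨r, hr⟩ := ho
      right; left; exact ⟨r - 5, by omega, by omega, by unfold TL; omega⟩
  · right; right
    intro i hi1 hi2
    unfold ZL TL; omega

end S7
namespace S7

theorem pf2_same {l : List ℕ} {a : ℕ} : pf2 a a l = l.filter (fun x => x = a) := by
  apply List.filter_congr; intro x _; simp [or_self]

theorem G_of_pf3 {l : List ℕ} {a b c : ℕ} {G : List (Fin 3)}
    (hinj : Function.Injective (psi3 a b c))
    (hGpf : ∀ i j : Fin 3, pf2 (psi3 a b c i) (psi3 a b c j) l =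
      (G.filter (fun y => y = i ∨ y = j)).map (psi3 a b c))
    (i j : Fin 3) {P : List (Fin 3)}
    (hP : pf2 (psi3 a b c i) (psi3 a b c j) l = P.map (psi3 a b c)) :
    G.filter (fun y => y = i ∨ y = j) = P := by
  apply List.map_injective_iff.mpr hinj
  rw [← hGpf i j, hP]

theorem G_of_pf4 {l : List ℕ} {a b c d : ℕ} {G : List (Fin 4)}
    (hinj : Function.Injective (psi4 a b c d))
    (hGpf : ∀ i j : Fin 4, pf2 (psi4 a b c d i) (psi4 a b c d j) l =
      (G.filter (fun y => y = i ∨ y = j)).map (psi4 a b c d))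
    (i j : Fin 4) {P : List (Fin 4)}
    (hP : pf2 (psi4 a b c d i) (psi4 a b c d j) l = P.map (psi4 a b c d)) :
    G.filter (fun y => y = i ∨ y = j) = P := by
  apply List.map_injective_iff.mpr hinj
  rw [← hGpf i j, hP]

theorem cQ_dom {i j : ℕ} :
    ∀ x, (decide (x = ZL i ∨ x = TL i ∨ x = ZL j ∨ x = TL j)) = (cQ i j x).isSome := by
  intro x; unfold cQ; split_ifs <;> simp [*]

section main

variable {n m : ℕ} {ρ : ℕ → ℕ} {kv : ℕ → ℕ} {vL : List ℕ}

theorem hpos_of_master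
    (hmaster : ∀ c : ℕ → Option ℕ,
      enc ((FreeMonoid.toList (hatA n m ρ)).filterMap c) = enc (vL.filterMap c))
    (c : ℕ → Option ℕ) (L : List ℕ)
    (hL : (FreeMonoid.toList (hatA n m ρ)).filterMap c = L) (hinf : L <:+: W) :
    vL.filterMap c = L := by
  have h := hmaster c
  rw [hL] at h
  exact (enc_inj hinf h).symm

theorem thmFZT
    (hinj : ∀ k k', 1 ≤ k → k ≤ n + m → 1 ≤ k' → k' ≤ n + m → ρ k = ρ k' → k = k')
    (hkv : ∀ i, 1 ≤ i → i ≤ n + m → 1 ≤ kv i ∧ kv i ≤ n + m ∧ ρ (kv i) = i)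
    (hmaster : ∀ c : ℕ → Option ℕ,
      enc ((FreeMonoid.toList (hatA n m ρ)).filterMap c) = enc (vL.filterMap c)) :
    ∀ i, 1 ≤ i → i ≤ n + m →
      pf2 (ZL i) (TL i) vL = [ZL i, TL i, ZL i] ∧
      pf2 (ZL i) (TL i) (FreeMonoid.toList (hatA n m ρ)) = [ZL i, TL i, ZL i] := by
  intro i h1 h2
  obtain ⟨hk1, hk2, hk3⟩ := hkv i h1 h2
  have hcomp : (FreeMonoid.toList (hatA n m ρ)).filterMap (cZT i i) = [1, 3, 1] := by
    rcases le_or_gt i n with hc | hc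
    · exact comp_zt_ll h1 le_rfl hc hk1 hk2 hk3 hinj
    · exact comp_zt_hh hc le_rfl h2 hk1 hk2 hk3 hinj
  exact ⟨pfact_zt (hpos_of_master hmaster _ _ hcomp (by decide)), pfact_zt hcomp⟩

theorem thmFTT
    (hmaster : ∀ c : ℕ → Option ℕ,
      enc ((FreeMonoid.toList (hatA n m ρ)).filterMap c) = enc (vL.filterMap c)) :
    ∀ i j, 1 ≤ i → i < j → j ≤ n + m →
      pf2 (TL i) (TL j) vL = [TL i, TL j] ∧
      pf2 (TL i) (TL j) (FreeMonoid.toList (hatA n m ρ)) = [TL i, TL j] := by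
  intro i j h1 h2 h3
  have hcomp : (FreeMonoid.toList (hatA n m ρ)).filterMap (cTT i j) = [1, 3] := by
    rcases le_or_gt j n with hc | hc
    · exact comp_tt_ll h1 h2 hc
    · rcases le_or_gt i n with hd | hd
      · exact comp_tt_lh h1 hd hc h3
      · exact comp_tt_hh hd h2 h3
  exact ⟨pfact_tt (hpos_of_master hmaster _ _ hcomp (by decide)), pfact_tt hcomp⟩

theorem thmFG3a
    (hinj : ∀ k k', 1 ≤ k → k ≤ n + m → 1 ≤ k' → k' ≤ n + m → ρ k = ρ k' → k = k')
    (hkv : ∀ i, 1 ≤ i → i ≤ n + m → 1 ≤ kv i ∧ kv i ≤ n + m ∧ ρ (kv i) = i)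
    (hmaster : ∀ c : ℕ → Option ℕ,
      enc ((FreeMonoid.toList (hatA n m ρ)).filterMap c) = enc (vL.filterMap c)) :
    ∀ i j, 1 ≤ j → j ≤ n → ((j < i ∧ i ≤ n) ∨ (n < i ∧ i ≤ n + m)) →
      vL.filter (fun x => x = TL j ∨ x = ZL i ∨ x = TL i) = [TL j, ZL i, TL i, ZL i] ∧
      (FreeMonoid.toList (hatA n m ρ)).filter (fun x => x = TL j ∨ x = ZL i ∨ x = TL i)
        = [TL j, ZL i, TL i, ZL i] := by
  intro i j h1 h2 hc
  have h3 : 1 ≤ i := by rcases hc with ⟨a, b⟩ | ⟨a, b⟩ <;> omega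
  have h4 : i ≤ n + m := by rcases hc with ⟨a, b⟩ | ⟨a, b⟩ <;> omega
  obtain ⟨hk1, hk2, hk3⟩ := hkv i h3 h4
  have hcomp : (FreeMonoid.toList (hatA n m ρ)).filterMap (cTZT j i) = [0, 1, 3, 1] := by
    rcases hc with ⟨a, b⟩ | ⟨a, b⟩
    · exact comp_tzt_l h1 a b hk1 hk2 hk3 hinj
    · exact comp_tzt_h h1 h2 a b hk1 hk2 hk3 hinj
  exact ⟨pfact_tzt (hpos_of_master hmaster _ _ hcomp (by decide)), pfact_tzt hcomp⟩

theorem thmFG3b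
    (hinj : ∀ k k', 1 ≤ k → k ≤ n + m → 1 ≤ k' → k' ≤ n + m → ρ k = ρ k' → k = k')
    (hkv : ∀ i, 1 ≤ i → i ≤ n + m → 1 ≤ kv i ∧ kv i ≤ n + m ∧ ρ (kv i) = i)
    (hmaster : ∀ c : ℕ → Option ℕ,
      enc ((FreeMonoid.toList (hatA n m ρ)).filterMap c) = enc (vL.filterMap c)) :
    ∀ i j, ((1 ≤ i ∧ i < j ∧ j ≤ n) ∨ (n < j ∧ j < i ∧ i ≤ n + m)) →
      pf2 (ZL i) (TL j) vL = [ZL i, TL j, ZL i] ∧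
      pf2 (ZL i) (TL j) (FreeMonoid.toList (hatA n m ρ)) = [ZL i, TL j, ZL i] := by
  intro i j hc
  have h3 : 1 ≤ i := by rcases hc with ⟨a, b, c'⟩ | ⟨a, b, c'⟩ <;> omega
  have h4 : i ≤ n + m := by rcases hc with ⟨a, b, c'⟩ | ⟨a, b, c'⟩ <;> omega
  obtain ⟨hk1, hk2, hk3⟩ := hkv i h3 h4
  have hcomp : (FreeMonoid.toList (hatA n m ρ)).filterMap (cZT i j) = [1, 3, 1] := by
    rcases hc with ⟨a, b, c'⟩ | ⟨a, b, c'⟩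
    · exact comp_zt_ll a (le_of_lt b) c' hk1 hk2 hk3 hinj
    · exact comp_zt_hh a (le_of_lt b) c' hk1 hk2 hk3 hinj
  exact ⟨pfact_zt (hpos_of_master hmaster _ _ hcomp (by decide)), pfact_zt hcomp⟩

theorem thmFG3c
    (hinj : ∀ k k', 1 ≤ k → k ≤ n + m → 1 ≤ k' → k' ≤ n + m → ρ k = ρ k' → k = k')
    (hkv : ∀ i, 1 ≤ i → i ≤ n + m → 1 ≤ kv i ∧ kv i ≤ n + m ∧ ρ (kv i) = i)
    (hmaster : ∀ c : ℕ → Option ℕ,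
      enc ((FreeMonoid.toList (hatA n m ρ)).filterMap c) = enc (vL.filterMap c)) :
    ∀ i j, ((1 ≤ i ∧ i ≤ n ∧ n < j ∧ j ≤ n + m) ∨ (n < i ∧ i < j ∧ j ≤ n + m)) →
      vL.filter (fun x => x = ZL i ∨ x = TL i ∨ x = TL j) = [ZL i, TL i, ZL i, TL j] ∧
      (FreeMonoid.toList (hatA n m ρ)).filter (fun x => x = ZL i ∨ x = TL i ∨ x = TL j)
        = [ZL i, TL i, ZL i, TL j] := by
  intro i j hc
  have h3 : 1 ≤ i := by rcases hc with ⟨a, b, c', d⟩ | ⟨a, b, c'⟩ <;> omega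
  have h4 : i ≤ n + m := by rcases hc with ⟨a, b, c', d⟩ | ⟨a, b, c'⟩ <;> omega
  obtain ⟨hk1, hk2, hk3⟩ := hkv i h3 h4
  have hcomp : (FreeMonoid.toList (hatA n m ρ)).filterMap (cZTT i j) = [0, 2, 0, 1] := by
    rcases hc with ⟨a, b, c', d⟩ | ⟨a, b, c'⟩
    · exact comp_ztt_lh a b c' d hk1 hk2 hk3 hinj
    · exact comp_ztt_hh a b c' hk1 hk2 hk3 hinj
  exact ⟨pfact_ztt (hpos_of_master hmaster _ _ hcomp (by decide)), pfact_ztt hcomp⟩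

theorem thmFNE
    (hmap : ∀ k, 1 ≤ k → k ≤ n + m → 1 ≤ ρ k ∧ ρ k ≤ n + m)
    (hmaster : ∀ c : ℕ → Option ℕ,
      enc ((FreeMonoid.toList (hatA n m ρ)).filterMap c) = enc (vL.filterMap c)) :
    ∀ a, (∀ i, 1 ≤ i → i ≤ n + m → a ≠ ZL i ∧ a ≠ TL i) →
      a ∉ vL ∧ a ∉ (FreeMonoid.toList (hatA n m ρ)) := by
  intro a ha
  have hcomp := comp_ne (ρ := ρ) hmap ha
  exact ⟨notmem_of_fm (hpos_of_master hmaster _ _ hcomp List.nil_infix),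
    notmem_of_fm hcomp⟩

end main

end S7
namespace S7

section main

variable {n m : ℕ} {ρ : ℕ → ℕ} {kv : ℕ → ℕ} {vL : List ℕ}

theorem thmFLH
    (hinj : ∀ k k', 1 ≤ k → k ≤ n + m → 1 ≤ k' → k' ≤ n + m → ρ k = ρ k' → k = k')
    (hkv : ∀ i, 1 ≤ i → i ≤ n + m → 1 ≤ kv i ∧ kv i ≤ n + m ∧ ρ (kv i) = i)
    (hmaster : ∀ c : ℕ → Option ℕ,
      enc ((FreeMonoid.toList (hatA n m ρ)).filterMap c) = enc (vL.filterMap c)) :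
    ∀ i j, 1 ≤ i → i ≤ n → n < j → j ≤ n + m →
      (pf2 (ZL i) (ZL j) vL = pf2 (ZL i) (ZL j) (FreeMonoid.toList (hatA n m ρ))) ∧
      (kv i < kv j → pf2 (ZL i) (ZL j) vL = [ZL i, ZL i, ZL j, ZL j]) ∧
      (kv j < kv i → pf2 (ZL i) (ZL j) vL = [ZL i, ZL j, ZL i, ZL j]) := by
  intro i j h1 h2 h3 h4
  obtain ⟨hk1, hk2, hk3⟩ := hkv i h1 (by omega)
  obtain ⟨hl1, hl2, hl3⟩ := hkv j (by omega) h4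
  have hkne : kv i ≠ kv j := by
    intro he; rw [he, hl3] at hk3; omega
  rcases Nat.lt_or_ge (kv i) (kv j) with hord | hord
  · -- Z i before Z j in the middle block
    have hcomp := comp_q_lt h1 h2 h3 h4 hk1 hk2 hk3 hl1 hl2 hl3 hord hinj
    have hqv := pfact_q (hpos_of_master hmaster _ _ hcomp (by decide))
    have hqu := pfact_q hcomp
    have hsub : ∀ x : ℕ, (x = ZL i ∨ x = ZL j) →
        (decide (x = ZL i ∨ x = TL i ∨ x = ZL j ∨ x = TL j)) = true := by
      intro x hx; rcases hx with h | h <;> simp [h]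
    have hv2 := pf2_of_filter hqv hsub
    have hu2 := pf2_of_filter hqu hsub
    have heval : ([ZL i, TL i, ZL i, ZL j, TL j, ZL j].filter
        (fun x => x = ZL i ∨ x = ZL j)) = [ZL i, ZL i, ZL j, ZL j] := by
      simp [List.filter_cons]
    exact ⟨hv2.trans hu2.symm, fun _ => hv2.trans heval,
      fun hcon => absurd hord (by omega)⟩
  · have hord' : kv j < kv i := by omega
    have hcompz := comp_zz_lh_gt h1 h2 h3 h4 hk1 hk2 hk3 hl1 hl2 hl3 hord' hinj
    have hu2 : pf2 (ZL i) (ZL j) (FreeMonoid.toList (hatA n m ρ))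
        = [ZL i, ZL j, ZL i, ZL j] := (pfact_zz hcompz).trans rfl
    have hab : ZL i ≠ TL i := by simp
    have hac : ZL i ≠ ZL j := by simp; omega
    have had : ZL i ≠ TL j := by simp
    have hbc : TL i ≠ ZL j := by simp
    have hbd : TL i ≠ TL j := by simp; omega
    have hcd : ZL j ≠ TL j := by simp
    obtain ⟨G, hGset, hGpf⟩ := transfer4 (ZL i) (TL i) (ZL j) (TL j)
      hab hac had hbc hbd hcd vL
    have hinjψ := psi4_inj hab hac had hbc hbd hcd
    have f01 := (thmFZT hinj hkv hmaster i h1 (by omega)).1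
    have f23 := (thmFZT hinj hkv hmaster j (by omega) h4).1
    have f12 : pf2 (TL i) (ZL j) vL = [TL i, ZL j, ZL j] := by
      have ht := (thmFG3a hinj hkv hmaster j i h1 h2 (Or.inr ⟨h3, h4⟩)).1
      have h5 := pf2_of_filter (a := TL i) (b := ZL j) ht
        (by intro x hx; rcases hx with h | h <;> simp [h])
      rw [h5]
      simp [List.filter_cons, show (j : ℕ) ≠ i from by omega]
    have f03 : pf2 (ZL i) (TL j) vL = [ZL i, ZL i, TL j] := by
      have ht := (thmFG3c hinj hkv hmaster i j (Or.inl ⟨h1, h2, h3, h4⟩)).1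
      have h5 := pf2_of_filter (a := ZL i) (b := TL j) ht
        (by intro x hx; rcases hx with h | h <;> simp [h])
      rw [h5]
      simp [List.filter_cons, show (i : ℕ) ≠ j from by omega]
    have g01 := G_of_pf4 hinjψ hGpf 0 1 (P := [0, 1, 0])
      (by rw [psi4_0, psi4_1, f01]; rfl)
    have g12 := G_of_pf4 hinjψ hGpf 1 2 (P := [1, 2, 2])
      (by rw [psi4_1, psi4_2, f12]; rfl)
    have g03 := G_of_pf4 hinjψ hGpf 0 3 (P := [0, 0, 3])
      (by rw [psi4_0, psi4_3, f03]; rfl)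
    have g23 := G_of_pf4 hinjψ hGpf 2 3 (P := [2, 3, 2])
      (by rw [psi4_2, psi4_3, f23]; rfl)
    rcases DL1 G g01 g12 g03 g23 with hG | hG
    · exfalso
      have hFv : vL.filter (fun x => x = ZL i ∨ x = TL i ∨ x = ZL j ∨ x = TL j)
          = [ZL i, TL i, ZL i, ZL j, TL j, ZL j] := by rw [hGset, hG]; rfl
      have hvfm : vL.filterMap (cQ i j) = [0, 2, 0, 1, 3, 1] := by
        rw [fm_via_filter cQ_dom hFv]
        simp [List.filterMap_cons, cQ_zi, cQ_ti, cQ_zj (show j ≠ i from by omega),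
          cQ_tj (show j ≠ i from by omega)]
      have hM := hmaster (cQ i j)
      have hcompq := comp_q_gt h1 h2 h3 h4 hk1 hk2 hk3 hl1 hl2 hl3 hord' hinj
      rw [hcompq, hvfm, enc, enc, dif_neg (by decide), dif_pos (by decide)] at hM
      cases hM
    · have hv2 : pf2 (ZL i) (ZL j) vL = [ZL i, ZL j, ZL i, ZL j] := by
        have hx := hGpf 0 2
        rw [psi4_0, psi4_2, hG] at hx
        rw [hx, show (([0, 1, 2, 0, 3, 2] : List (Fin 4)).filter
          (fun y => y = 0 ∨ y = 2)) = [0, 2, 0, 2] from by decide]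
        rfl
      exact ⟨hv2.trans hu2.symm, fun hcon => absurd hord' (by omega), fun _ => hv2⟩

end main

end S7
namespace S7

theorem intersect_ll_lt {X : List ℕ} {a b : ℕ} (hne : a ≠ b)
    (hA : X = [a, a, b, b] ∨ X = [a, b, a, b] ∨ X = [a, b, b, a])
    (hB : X = [a, b, a, b] ∨ X = [b, a, b, a] ∨ X = [a, b, b, a] ∨ X = [b, a, a, b])
    (hC : X = [a, a, b, b] ∨ X = [a, b, a, b] ∨ X = [b, a, a, b]) :
    X = [a, b, a, b] := by
  rcases hA with h | h | h <;> subst h <;>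
    rcases hB with h | h | h | h <;> rcases hC with h | h | h <;>
    first | rfl | simp_all [hne]

theorem intersect_ll_gt {X : List ℕ} {a b : ℕ} (hne : a ≠ b)
    (hA : X = [a, a, b, b] ∨ X = [a, b, a, b] ∨ X = [a, b, b, a])
    (hB : X = [a, b, a, b] ∨ X = [b, a, b, a] ∨ X = [a, b, b, a] ∨ X = [b, a, a, b])
    (hC : X = [a, b, b, a] ∨ X = [b, a, b, a] ∨ X = [b, b, a, a]) :
    X = [a, b, b, a] := by
  rcases hA with h | h | h <;> subst h <;>
    rcases hB with h | h | h | h <;> rcases hC with h | h | h <;>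
    first | rfl | simp_all [hne]

theorem intersect_hh_lt {X : List ℕ} {a b : ℕ} (hne : a ≠ b)
    (hB : X = [a, b, a, b] ∨ X = [b, a, b, a] ∨ X = [a, b, b, a] ∨ X = [b, a, a, b])
    (hD : X = [a, a, b, b] ∨ X = [a, b, a, b] ∨ X = [b, a, a, b])
    (hC : X = [a, a, b, b] ∨ X = [a, b, a, b] ∨ X = [a, b, b, a]) :
    X = [a, b, a, b] := by
  rcases hB with h | h | h | h <;> subst h <;>
    rcases hD with h | h | h <;> rcases hC with h | h | h <;>
    first | rfl | simp_all [hne]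

theorem intersect_hh_gt {X : List ℕ} {a b : ℕ} (hne : a ≠ b)
    (hB : X = [a, b, a, b] ∨ X = [b, a, b, a] ∨ X = [a, b, b, a] ∨ X = [b, a, a, b])
    (hD : X = [a, a, b, b] ∨ X = [a, b, a, b] ∨ X = [b, a, a, b])
    (hC : X = [b, a, a, b] ∨ X = [b, a, b, a] ∨ X = [b, b, a, a]) :
    X = [b, a, a, b] := by
  rcases hB with h | h | h | h <;> subst h <;>
    rcases hD with h | h | h <;> rcases hC with h | h | h <;>
    first | rfl | simp_all [hne]

section main

variable {n m : ℕ} {ρ : ℕ → ℕ} {kv : ℕ → ℕ} {vL : List ℕ}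

theorem thmFLL
    (hmap : ∀ k, 1 ≤ k → k ≤ n + m → 1 ≤ ρ k ∧ ρ k ≤ n + m)
    (hinj : ∀ k k', 1 ≤ k → k ≤ n + m → 1 ≤ k' → k' ≤ n + m → ρ k = ρ k' → k = k')
    (halt : ∀ i, 1 ≤ i → i < n + m →
      ((1 ≤ ρ i ∧ ρ i ≤ n) ↔ ¬(1 ≤ ρ (i + 1) ∧ ρ (i + 1) ≤ n)))
    (hkv : ∀ i, 1 ≤ i → i ≤ n + m → 1 ≤ kv i ∧ kv i ≤ n + m ∧ ρ (kv i) = i)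
    (hmaster : ∀ c : ℕ → Option ℕ,
      enc ((FreeMonoid.toList (hatA n m ρ)).filterMap c) = enc (vL.filterMap c)) :
    ∀ i j, 1 ≤ i → i < j → j ≤ n →
      pf2 (ZL i) (ZL j) vL = pf2 (ZL i) (ZL j) (FreeMonoid.toList (hatA n m ρ)) := by
  intro i j h1 h2 h3
  obtain ⟨hk1, hk2, hk3⟩ := hkv i h1 (by omega)
  obtain ⟨hl1, hl2, hl3⟩ := hkv j (by omega) (by omega)
  have hzne : ZL i ≠ ZL j := by simp; omega
  -- A options
  have hA : pf2 (ZL i) (ZL j) vL = [ZL i, ZL i, ZL j, ZL j] ∨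
      pf2 (ZL i) (ZL j) vL = [ZL i, ZL j, ZL i, ZL j] ∨
      pf2 (ZL i) (ZL j) vL = [ZL i, ZL j, ZL j, ZL i] := by
    have fA01 := (thmFZT hinj hkv hmaster i h1 (by omega)).1
    have fA12 : pf2 (TL i) (ZL j) vL = [TL i, ZL j, ZL j] := by
      have ht := (thmFG3a hinj hkv hmaster j i h1 (by omega) (Or.inl ⟨h2, h3⟩)).1
      have h5 := pf2_of_filter (a := TL i) (b := ZL j) ht
        (by intro x hx; rcases hx with h | h <;> simp [h])
      rw [h5]
      simp [List.filter_cons, show (j : ℕ) ≠ i from by omega]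
    obtain ⟨GA, _, hGA⟩ := transfer3 (ZL i) (TL i) (ZL j)
      (by simp) (by simp; omega) (by simp) vL
    have hinjA := psi3_inj (a := ZL i) (b := TL i) (c := ZL j)
      (by simp) (by simp; omega) (by simp)
    have gA01 := G_of_pf3 hinjA hGA 0 1 (P := [0, 1, 0])
      (by rw [psi3_0, psi3_1, fA01]; rfl)
    have gA12 := G_of_pf3 hinjA hGA 1 2 (P := [1, 2, 2])
      (by rw [psi3_1, psi3_2, fA12]; rfl)
    have hApf := hGA 0 2
    rw [psi3_0, psi3_2] at hApf
    rcases DLA GA gA01 gA12 with h | h | h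
    · left; rw [hApf, h]; rfl
    · right; left; rw [hApf, h]; rfl
    · right; right; rw [hApf, h]; rfl
  -- B options
  have hB : pf2 (ZL i) (ZL j) vL = [ZL i, ZL j, ZL i, ZL j] ∨
      pf2 (ZL i) (ZL j) vL = [ZL j, ZL i, ZL j, ZL i] ∨
      pf2 (ZL i) (ZL j) vL = [ZL i, ZL j, ZL j, ZL i] ∨
      pf2 (ZL i) (ZL j) vL = [ZL j, ZL i, ZL i, ZL j] := by
    have fB01 : pf2 (ZL i) (TL j) vL = [ZL i, TL j, ZL i] :=
      (thmFG3b hinj hkv hmaster i j (Or.inl ⟨h1, h2, h3⟩)).1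
    have fB12 : pf2 (TL j) (ZL j) vL = [ZL j, TL j, ZL j] := by
      rw [pf2_comm]; exact (thmFZT hinj hkv hmaster j (by omega) (by omega)).1
    obtain ⟨GB, _, hGB⟩ := transfer3 (ZL i) (TL j) (ZL j)
      (by simp) (by simp; omega) (by simp) vL
    have hinjB := psi3_inj (a := ZL i) (b := TL j) (c := ZL j)
      (by simp) (by simp; omega) (by simp)
    have gB01 := G_of_pf3 hinjB hGB 0 1 (P := [0, 1, 0])
      (by rw [psi3_0, psi3_1, fB01]; rfl)
    have gB12 := G_of_pf3 hinjB hGB 1 2 (P := [2, 1, 2])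
      (by rw [psi3_1, psi3_2, fB12]; rfl)
    have hBpf := hGB 0 2
    rw [psi3_0, psi3_2] at hBpf
    rcases DLB GB gB01 gB12 with h | h | h | h
    · left; rw [hBpf, h]; rfl
    · right; left; rw [hBpf, h]; rfl
    · right; right; left; rw [hBpf, h]; rfl
    · right; right; right; rw [hBpf, h]; rfl
  rcases Nat.lt_or_ge (kv i) (kv j) with hord | hord
  · -- mid order: i before j
    have hu : pf2 (ZL i) (ZL j) (FreeMonoid.toList (hatA n m ρ))
        = [ZL i, ZL j, ZL i, ZL j] :=
      (pfact_zz (comp_zz_ll_lt h1 h2 h3 hk1 hk2 hk3 hl1 hl2 hl3 hord hinj)).trans rfl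
    obtain ⟨kh, hh1, hh2, hh3, hh4, hh5, _⟩ := step_mid hmap halt
      (by constructor <;> intro <;> omega) hk1 hk2 hk3 hl1 hl2 hl3 hord
    have hhi : n < ρ kh := hh5 (by omega)
    have hh6 : ρ kh ≤ n + m := (hmap kh hh1 hh2).2
    have hkvh : kv (ρ kh) = kh := by
      obtain ⟨a, b, c'⟩ := hkv (ρ kh) (by omega) hh6
      exact hinj _ _ a b hh1 hh2 c'
    have fC1 : pf2 (ZL i) (ZL (ρ kh)) vL = [ZL i, ZL i, ZL (ρ kh), ZL (ρ kh)] :=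
      (thmFLH hinj hkv hmaster i (ρ kh) h1 (by omega) hhi hh6).2.1 (by rw [hkvh]; omega)
    have fC2 : pf2 (ZL j) (ZL (ρ kh)) vL = [ZL j, ZL (ρ kh), ZL j, ZL (ρ kh)] :=
      (thmFLH hinj hkv hmaster j (ρ kh) (by omega) h3 hhi hh6).2.2 (by rw [hkvh]; omega)
    have hC : pf2 (ZL i) (ZL j) vL = [ZL i, ZL i, ZL j, ZL j] ∨
        pf2 (ZL i) (ZL j) vL = [ZL i, ZL j, ZL i, ZL j] ∨
        pf2 (ZL i) (ZL j) vL = [ZL j, ZL i, ZL i, ZL j] := by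
      obtain ⟨GC, _, hGC⟩ := transfer3 (ZL i) (ZL j) (ZL (ρ kh))
        (by simp; omega) (by simp; omega) (by simp; omega) vL
      have hinjC := psi3_inj (a := ZL i) (b := ZL j) (c := ZL (ρ kh))
        (by simp; omega) (by simp; omega) (by simp; omega)
      have gC02 := G_of_pf3 hinjC hGC 0 2 (P := [0, 0, 2, 2])
        (by rw [psi3_0, psi3_2, fC1]; rfl)
      have gC12 := G_of_pf3 hinjC hGC 1 2 (P := [1, 2, 1, 2])
        (by rw [psi3_1, psi3_2, fC2]; rfl)
      have hCpf := hGC 0 1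
      rw [psi3_0, psi3_1] at hCpf
      rcases DLC1 GC gC02 gC12 with h | h | h
      · left; rw [hCpf, h]; rfl
      · right; left; rw [hCpf, h]; rfl
      · right; right; rw [hCpf, h]; rfl
    rw [hu]
    exact intersect_ll_lt hzne hA hB hC
  · have hord' : kv j < kv i := by
      have : kv i ≠ kv j := fun he => by rw [he, hl3] at hk3; omega
      omega
    have hu : pf2 (ZL i) (ZL j) (FreeMonoid.toList (hatA n m ρ))
        = [ZL i, ZL j, ZL j, ZL i] :=
      (pfact_zz (comp_zz_ll_gt h1 h2 h3 hk1 hk2 hk3 hl1 hl2 hl3 hord' hinj)).trans rfl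
    obtain ⟨kh, hh1, hh2, hh3, hh4, hh5, _⟩ := step_mid hmap halt
      (by constructor <;> intro <;> omega) hl1 hl2 hl3 hk1 hk2 hk3 hord'
    have hhi : n < ρ kh := hh5 (by omega)
    have hh6 : ρ kh ≤ n + m := (hmap kh hh1 hh2).2
    have hkvh : kv (ρ kh) = kh := by
      obtain ⟨a, b, c'⟩ := hkv (ρ kh) (by omega) hh6
      exact hinj _ _ a b hh1 hh2 c'
    have fC1 : pf2 (ZL j) (ZL (ρ kh)) vL = [ZL j, ZL j, ZL (ρ kh), ZL (ρ kh)] :=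
      (thmFLH hinj hkv hmaster j (ρ kh) (by omega) h3 hhi hh6).2.1 (by rw [hkvh]; omega)
    have fC2 : pf2 (ZL i) (ZL (ρ kh)) vL = [ZL i, ZL (ρ kh), ZL i, ZL (ρ kh)] :=
      (thmFLH hinj hkv hmaster i (ρ kh) h1 (by omega) hhi hh6).2.2 (by rw [hkvh]; omega)
    have hC : pf2 (ZL i) (ZL j) vL = [ZL i, ZL j, ZL j, ZL i] ∨
        pf2 (ZL i) (ZL j) vL = [ZL j, ZL i, ZL j, ZL i] ∨
        pf2 (ZL i) (ZL j) vL = [ZL j, ZL j, ZL i, ZL i] := by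
      obtain ⟨GC, _, hGC⟩ := transfer3 (ZL i) (ZL j) (ZL (ρ kh))
        (by simp; omega) (by simp; omega) (by simp; omega) vL
      have hinjC := psi3_inj (a := ZL i) (b := ZL j) (c := ZL (ρ kh))
        (by simp; omega) (by simp; omega) (by simp; omega)
      have gC02 := G_of_pf3 hinjC hGC 0 2 (P := [0, 2, 0, 2])
        (by rw [psi3_0, psi3_2, fC2]; rfl)
      have gC12 := G_of_pf3 hinjC hGC 1 2 (P := [1, 1, 2, 2])
        (by rw [psi3_1, psi3_2, fC1]; rfl)
      have hCpf := hGC 0 1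
      rw [psi3_0, psi3_1] at hCpf
      rcases DLC2 GC gC02 gC12 with h | h | h
      · left; rw [hCpf, h]; rfl
      · right; left; rw [hCpf, h]; rfl
      · right; right; rw [hCpf, h]; rfl
    rw [hu]
    exact intersect_ll_gt hzne hA hB hC
  
theorem thmFHH
    (hmap : ∀ k, 1 ≤ k → k ≤ n + m → 1 ≤ ρ k ∧ ρ k ≤ n + m)
    (hinj : ∀ k k', 1 ≤ k → k ≤ n + m → 1 ≤ k' → k' ≤ n + m → ρ k = ρ k' → k = k')
    (halt : ∀ i, 1 ≤ i → i < n + m →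
      ((1 ≤ ρ i ∧ ρ i ≤ n) ↔ ¬(1 ≤ ρ (i + 1) ∧ ρ (i + 1) ≤ n)))
    (hkv : ∀ i, 1 ≤ i → i ≤ n + m → 1 ≤ kv i ∧ kv i ≤ n + m ∧ ρ (kv i) = i)
    (hmaster : ∀ c : ℕ → Option ℕ,
      enc ((FreeMonoid.toList (hatA n m ρ)).filterMap c) = enc (vL.filterMap c)) :
    ∀ i j, n < i → i < j → j ≤ n + m →
      pf2 (ZL i) (ZL j) vL = pf2 (ZL i) (ZL j) (FreeMonoid.toList (hatA n m ρ)) := by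
  intro i j h1 h2 h3
  obtain ⟨hk1, hk2, hk3⟩ := hkv i (by omega) (by omega)
  obtain ⟨hl1, hl2, hl3⟩ := hkv j (by omega) h3
  have hzne : ZL i ≠ ZL j := by simp; omega
  -- B options (t = T i between both pairs)
  have hB : pf2 (ZL i) (ZL j) vL = [ZL i, ZL j, ZL i, ZL j] ∨
      pf2 (ZL i) (ZL j) vL = [ZL j, ZL i, ZL j, ZL i] ∨
      pf2 (ZL i) (ZL j) vL = [ZL i, ZL j, ZL j, ZL i] ∨
      pf2 (ZL i) (ZL j) vL = [ZL j, ZL i, ZL i, ZL j] := by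
    have fB01 := (thmFZT hinj hkv hmaster i (by omega) (by omega)).1
    have fB12 : pf2 (TL i) (ZL j) vL = [ZL j, TL i, ZL j] := by
      rw [pf2_comm]
      exact (thmFG3b hinj hkv hmaster j i (Or.inr ⟨h1, h2, h3⟩)).1
    obtain ⟨GB, _, hGB⟩ := transfer3 (ZL i) (TL i) (ZL j)
      (by simp) (by simp; omega) (by simp) vL
    have hinjB := psi3_inj (a := ZL i) (b := TL i) (c := ZL j)
      (by simp) (by simp; omega) (by simp)
    have gB01 := G_of_pf3 hinjB hGB 0 1 (P := [0, 1, 0])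
      (by rw [psi3_0, psi3_1, fB01]; rfl)
    have gB12 := G_of_pf3 hinjB hGB 1 2 (P := [2, 1, 2])
      (by rw [psi3_1, psi3_2, fB12]; rfl)
    have hBpf := hGB 0 2
    rw [psi3_0, psi3_2] at hBpf
    rcases DLB GB gB01 gB12 with h | h | h | h
    · left; rw [hBpf, h]; rfl
    · right; left; rw [hBpf, h]; rfl
    · right; right; left; rw [hBpf, h]; rfl
    · right; right; right; rw [hBpf, h]; rfl
  -- D options
  have hD : pf2 (ZL i) (ZL j) vL = [ZL i, ZL i, ZL j, ZL j] ∨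
      pf2 (ZL i) (ZL j) vL = [ZL i, ZL j, ZL i, ZL j] ∨
      pf2 (ZL i) (ZL j) vL = [ZL j, ZL i, ZL i, ZL j] := by
    have fD01 : pf2 (ZL i) (TL j) vL = [ZL i, ZL i, TL j] := by
      have ht := (thmFG3c hinj hkv hmaster i j (Or.inr ⟨h1, h2, h3⟩)).1
      have h5 := pf2_of_filter (a := ZL i) (b := TL j) ht
        (by intro x hx; rcases hx with h | h <;> simp [h])
      rw [h5]
      simp [List.filter_cons, show (i : ℕ) ≠ j from by omega]
    have fD12 : pf2 (TL j) (ZL j) vL = [ZL j, TL j, ZL j] := by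
      rw [pf2_comm]; exact (thmFZT hinj hkv hmaster j (by omega) h3).1
    obtain ⟨GD, _, hGD⟩ := transfer3 (ZL i) (TL j) (ZL j)
      (by simp) (by simp; omega) (by simp) vL
    have hinjD := psi3_inj (a := ZL i) (b := TL j) (c := ZL j)
      (by simp) (by simp; omega) (by simp)
    have gD01 := G_of_pf3 hinjD hGD 0 1 (P := [0, 0, 1])
      (by rw [psi3_0, psi3_1, fD01]; rfl)
    have gD12 := G_of_pf3 hinjD hGD 1 2 (P := [2, 1, 2])
      (by rw [psi3_1, psi3_2, fD12]; rfl)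
    have hDpf := hGD 0 2
    rw [psi3_0, psi3_2] at hDpf
    rcases DLD GD gD01 gD12 with h | h | h
    · left; rw [hDpf, h]; rfl
    · right; left; rw [hDpf, h]; rfl
    · right; right; rw [hDpf, h]; rfl
  rcases Nat.lt_or_ge (kv i) (kv j) with hord | hord
  · have hu : pf2 (ZL i) (ZL j) (FreeMonoid.toList (hatA n m ρ))
        = [ZL i, ZL j, ZL i, ZL j] :=
      (pfact_zz (comp_zz_hh_lt h1 h2 h3 hk1 hk2 hk3 hl1 hl2 hl3 hord hinj)).trans rfl
    obtain ⟨kh, hh1, hh2, hh3, hh4, _, hh5⟩ := step_mid hmap halt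
      (by constructor <;> intro <;> omega) hk1 hk2 hk3 hl1 hl2 hl3 hord
    have hhi : 1 ≤ ρ kh ∧ ρ kh ≤ n := ⟨(hmap kh hh1 hh2).1, hh5 (by omega)⟩
    have hh6 : ρ kh ≤ n + m := (hmap kh hh1 hh2).2
    have hkvh : kv (ρ kh) = kh := by
      obtain ⟨a, b, c'⟩ := hkv (ρ kh) hhi.1 hh6
      exact hinj _ _ a b hh1 hh2 c'
    have fC1 : pf2 (ZL (ρ kh)) (ZL i) vL = [ZL (ρ kh), ZL i, ZL (ρ kh), ZL i] :=
      (thmFLH hinj hkv hmaster (ρ kh) i hhi.1 hhi.2 h1 (by omega)).2.2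
        (by rw [hkvh]; omega)
    have fC2 : pf2 (ZL (ρ kh)) (ZL j) vL = [ZL (ρ kh), ZL (ρ kh), ZL j, ZL j] :=
      (thmFLH hinj hkv hmaster (ρ kh) j hhi.1 hhi.2 (by omega) h3).2.1
        (by rw [hkvh]; omega)
    have hC : pf2 (ZL i) (ZL j) vL = [ZL i, ZL i, ZL j, ZL j] ∨
        pf2 (ZL i) (ZL j) vL = [ZL i, ZL j, ZL i, ZL j] ∨
        pf2 (ZL i) (ZL j) vL = [ZL i, ZL j, ZL j, ZL i] := by
      obtain ⟨GC, _, hGC⟩ := transfer3 (ZL i) (ZL j) (ZL (ρ kh))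
        (by simp; omega) (by simp; omega) (by simp; omega) vL
      have hinjC := psi3_inj (a := ZL i) (b := ZL j) (c := ZL (ρ kh))
        (by simp; omega) (by simp; omega) (by simp; omega)
      have gC02 := G_of_pf3 hinjC hGC 0 2 (P := [2, 0, 2, 0])
        (by rw [psi3_0, psi3_2, pf2_comm, fC1]; rfl)
      have gC12 := G_of_pf3 hinjC hGC 1 2 (P := [2, 2, 1, 1])
        (by rw [psi3_1, psi3_2, pf2_comm, fC2]; rfl)
      have hCpf := hGC 0 1
      rw [psi3_0, psi3_1] at hCpf
      rcases DLC3 GC gC02 gC12 with h | h | h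
      · left; rw [hCpf, h]; rfl
      · right; left; rw [hCpf, h]; rfl
      · right; right; rw [hCpf, h]; rfl
    rw [hu]
    exact intersect_hh_lt hzne hB hD hC
  · have hord' : kv j < kv i := by
      have : kv i ≠ kv j := fun he => by rw [he, hl3] at hk3; omega
      omega
    have hu : pf2 (ZL i) (ZL j) (FreeMonoid.toList (hatA n m ρ))
        = [ZL j, ZL i, ZL i, ZL j] :=
      (pfact_zz (comp_zz_hh_gt h1 h2 h3 hk1 hk2 hk3 hl1 hl2 hl3 hord' hinj)).trans rfl
    obtain ⟨kh, hh1, hh2, hh3, hh4, _, hh5⟩ := step_mid hmap halt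
      (by constructor <;> intro <;> omega) hl1 hl2 hl3 hk1 hk2 hk3 hord'
    have hhi : 1 ≤ ρ kh ∧ ρ kh ≤ n := ⟨(hmap kh hh1 hh2).1, hh5 (by omega)⟩
    have hh6 : ρ kh ≤ n + m := (hmap kh hh1 hh2).2
    have hkvh : kv (ρ kh) = kh := by
      obtain ⟨a, b, c'⟩ := hkv (ρ kh) hhi.1 hh6
      exact hinj _ _ a b hh1 hh2 c'
    have fC1 : pf2 (ZL (ρ kh)) (ZL j) vL = [ZL (ρ kh), ZL j, ZL (ρ kh), ZL j] :=
      (thmFLH hinj hkv hmaster (ρ kh) j hhi.1 hhi.2 (by omega) h3).2.2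
        (by rw [hkvh]; omega)
    have fC2 : pf2 (ZL (ρ kh)) (ZL i) vL = [ZL (ρ kh), ZL (ρ kh), ZL i, ZL i] :=
      (thmFLH hinj hkv hmaster (ρ kh) i hhi.1 hhi.2 h1 (by omega)).2.1
        (by rw [hkvh]; omega)
    have hC : pf2 (ZL i) (ZL j) vL = [ZL j, ZL i, ZL i, ZL j] ∨
        pf2 (ZL i) (ZL j) vL = [ZL j, ZL i, ZL j, ZL i] ∨
        pf2 (ZL i) (ZL j) vL = [ZL j, ZL j, ZL i, ZL i] := by
      obtain ⟨GC, _, hGC⟩ := transfer3 (ZL i) (ZL j) (ZL (ρ kh))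
        (by simp; omega) (by simp; omega) (by simp; omega) vL
      have hinjC := psi3_inj (a := ZL i) (b := ZL j) (c := ZL (ρ kh))
        (by simp; omega) (by simp; omega) (by simp; omega)
      have gC02 := G_of_pf3 hinjC hGC 0 2 (P := [2, 2, 0, 0])
        (by rw [psi3_0, psi3_2, pf2_comm, fC2]; rfl)
      have gC12 := G_of_pf3 hinjC hGC 1 2 (P := [2, 1, 2, 1])
        (by rw [psi3_1, psi3_2, pf2_comm, fC1]; rfl)
      have hCpf := hGC 0 1
      rw [psi3_0, psi3_1] at hCpf
      rcases DLC4 GC gC02 gC12 with h | h | h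
      · left; rw [hCpf, h]; rfl
      · right; left; rw [hCpf, h]; rfl
      · right; right; rw [hCpf, h]; rfl
    rw [hu]
    exact intersect_hh_gt hzne hB hD hC

end main

end S7
/-- For every `(n,m) ∈ N̂₀²` and every `(n,m)`-permutation `ρ`, the word
`â_{n,m}[ρ]` is an isoterm for the factor monoid `M(xzxyty)`. -/
theorem statement_7 (n m : ℕ) (hnm : InHatN n m) (ρ : ℕ → ℕ) (hρ : IsPQPerm ρ n m)
    (v : Word) (hv : ThFM [0, 2, 0, 1, 3, 1] (hatA n m ρ) v) : v = hatA n m ρ := by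
  classical
  open S7 in
  obtain ⟨hperm, haltM⟩ := hρ
  have hmap : ∀ k, 1 ≤ k → k ≤ n + m → 1 ≤ ρ k ∧ ρ k ≤ n + m := by
    intro k h1 h2
    have := hperm.mapsTo (Set.mem_Icc.mpr ⟨h1, h2⟩)
    simpa [Set.mem_Icc] using this
  have hinj : ∀ k k', 1 ≤ k → k ≤ n + m → 1 ≤ k' → k' ≤ n + m → ρ k = ρ k' → k = k' := by
    intro k k' a b c d h
    exact hperm.injOn (Set.mem_Icc.mpr ⟨a, b⟩) (Set.mem_Icc.mpr ⟨c, d⟩) h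
  have halt : ∀ i, 1 ≤ i → i < n + m →
      ((1 ≤ ρ i ∧ ρ i ≤ n) ↔ ¬(1 ≤ ρ (i + 1) ∧ ρ (i + 1) ≤ n)) := by
    intro i a b
    simpa [Set.mem_Icc] using haltM i a b
  have hsur : ∀ i, ∃ k, 1 ≤ i → i ≤ n + m → (1 ≤ k ∧ k ≤ n + m ∧ ρ k = i) := by
    intro i
    by_cases h : 1 ≤ i ∧ i ≤ n + m
    · obtain ⟨k, hk, hki⟩ := hperm.surjOn (Set.mem_Icc.mpr ⟨h.1, h.2⟩)
      exact ⟨k, fun _ _ => ⟨(Set.mem_Icc.mp hk).1, (Set.mem_Icc.mp hk).2, hki⟩⟩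
    · exact ⟨1, fun a b => absurd ⟨a, b⟩ h⟩
  choose kv hkv0 using hsur
  have hkv : ∀ i, 1 ≤ i → i ≤ n + m → 1 ≤ kv i ∧ kv i ≤ n + m ∧ ρ (kv i) = i :=
    fun i a b => hkv0 i a b
  have hmaster : ∀ c : ℕ → Option ℕ,
      enc ((FreeMonoid.toList (hatA n m ρ)).filterMap c)
        = enc ((FreeMonoid.toList v).filterMap c) := by
    intro c
    have h1 := fhom_apply c (FreeMonoid.toList (hatA n m ρ))
    rw [FreeMonoid.ofList_toList] at h1
    have h2 := fhom_apply c (FreeMonoid.toList v)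
    rw [FreeMonoid.ofList_toList] at h2
    rw [← h1, ← h2]
    exact hv (fhom c)
  have hZZ : ∀ i j, 1 ≤ i → i ≤ n + m → 1 ≤ j → j ≤ n + m → i < j →
      pf2 (ZL i) (ZL j) (FreeMonoid.toList v)
        = pf2 (ZL i) (ZL j) (FreeMonoid.toList (hatA n m ρ)) := by
    intro i j a b c d hij
    rcases le_or_gt j n with hj | hj
    · exact thmFLL hmap hinj halt hkv hmaster i j a hij hj
    · rcases le_or_gt i n with hi | hi
      · exact (thmFLH hinj hkv hmaster i j a hi hj d).1
      · exact thmFHH hmap hinj halt hkv hmaster i j hi hij d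
  have hZT : ∀ i j, 1 ≤ i → i ≤ n + m → 1 ≤ j → j ≤ n + m →
      pf2 (ZL i) (TL j) (FreeMonoid.toList v)
        = pf2 (ZL i) (TL j) (FreeMonoid.toList (hatA n m ρ)) := by
    intro i j a b c d
    rcases Nat.lt_trichotomy i j with hij | rfl | hij
    · rcases le_or_gt j n with hj | hj
      · obtain ⟨hv', hu'⟩ := thmFG3b hinj hkv hmaster i j (Or.inl ⟨a, hij, hj⟩)
        rw [hv', hu']
      · rcases le_or_gt i n with hi | hi
        · obtain ⟨hv', hu'⟩ := thmFG3c hinj hkv hmaster i j (Or.inl ⟨a, hi, hj, d⟩)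
          rw [pf2_of_filter hv'
              (by intro x hx; rcases hx with h | h <;> simp [h]),
            pf2_of_filter hu'
              (by intro x hx; rcases hx with h | h <;> simp [h])]
        · obtain ⟨hv', hu'⟩ := thmFG3c hinj hkv hmaster i j (Or.inr ⟨hi, hij, d⟩)
          rw [pf2_of_filter hv'
              (by intro x hx; rcases hx with h | h <;> simp [h]),
            pf2_of_filter hu'
              (by intro x hx; rcases hx with h | h <;> simp [h])]
    · obtain ⟨hv', hu'⟩ := thmFZT hinj hkv hmaster i a b
      rw [hv', hu']
    · rcases le_or_gt j n with hj | hj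
      · obtain ⟨hv', hu'⟩ := thmFG3a hinj hkv hmaster i j c hj
          (by rcases le_or_gt i n with h | h
              exacts [Or.inl ⟨hij, h⟩, Or.inr ⟨h, b⟩])
        rw [pf2_of_filter hv'
            (by intro x hx; rcases hx with h | h <;> simp [h]),
          pf2_of_filter hu'
            (by intro x hx; rcases hx with h | h <;> simp [h])]
      · obtain ⟨hv', hu'⟩ := thmFG3b hinj hkv hmaster i j (Or.inr ⟨hj, hij, b⟩)
        rw [hv', hu']
  have hZcnt : ∀ i, 1 ≤ i → i ≤ n + m →
      (FreeMonoid.toList v).filter (fun x => x = ZL i)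
        = (FreeMonoid.toList (hatA n m ρ)).filter (fun x => x = ZL i) := by
    intro i a b
    obtain ⟨hv', hu'⟩ := thmFZT hinj hkv hmaster i a b
    rw [pf1_of_filter hv' (by simp), pf1_of_filter hu' (by simp)]
  have hTcnt : ∀ i, 1 ≤ i → i ≤ n + m →
      (FreeMonoid.toList v).filter (fun x => x = TL i)
        = (FreeMonoid.toList (hatA n m ρ)).filter (fun x => x = TL i) := by
    intro i a b
    obtain ⟨hv', hu'⟩ := thmFZT hinj hkv hmaster i a b
    rw [pf1_of_filter hv' (by simp), pf1_of_filter hu' (by simp)]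
  apply FreeMonoid.toList.injective
  apply pf2_ext
  intro a b
  rcases letter_cases (n + m) a with ⟨i, hi1, hi2, rfl⟩ | ⟨i, hi1, hi2, rfl⟩ | houta
  · rcases letter_cases (n + m) b with ⟨j, hj1, hj2, rfl⟩ | ⟨j, hj1, hj2, rfl⟩ | houtb
    · rcases Nat.lt_trichotomy i j with hij | rfl | hij
      · exact hZZ i j hi1 hi2 hj1 hj2 hij
      · rw [pf2_same, pf2_same, hZcnt i hi1 hi2]
      · rw [pf2_comm (ZL i) (ZL j) (FreeMonoid.toList v),
          pf2_comm (ZL i) (ZL j) (FreeMonoid.toList (hatA n m ρ))]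
        exact hZZ j i hj1 hj2 hi1 hi2 hij
    · exact hZT i j hi1 hi2 hj1 hj2
    · have hb := thmFNE hmap hmaster b houtb
      rw [pf2_notmem hb.1, pf2_notmem hb.2, hZcnt i hi1 hi2]
  · rcases letter_cases (n + m) b with ⟨j, hj1, hj2, rfl⟩ | ⟨j, hj1, hj2, rfl⟩ | houtb
    · rw [pf2_comm (TL i) (ZL j) (FreeMonoid.toList v),
        pf2_comm (TL i) (ZL j) (FreeMonoid.toList (hatA n m ρ))]
      exact hZT j i hj1 hj2 hi1 hi2
    · rcases Nat.lt_trichotomy i j with hij | rfl | hij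
      · obtain ⟨hv', hu'⟩ := thmFTT hmaster i j hi1 hij hj2
        rw [hv', hu']
      · rw [pf2_same, pf2_same, hTcnt i hi1 hi2]
      · rw [pf2_comm (TL i) (TL j) (FreeMonoid.toList v),
          pf2_comm (TL i) (TL j) (FreeMonoid.toList (hatA n m ρ))]
        obtain ⟨hv', hu'⟩ := thmFTT hmaster j i hj1 hij hi2
        rw [hv', hu']
    · have hb := thmFNE hmap hmaster b houtb
      rw [pf2_notmem hb.1, pf2_notmem hb.2, hTcnt i hi1 hi2]
  · have ha := thmFNE hmap hmaster a houta
    rcases letter_cases (n + m) b with ⟨j, hj1, hj2, rfl⟩ | ⟨j, hj1, hj2, rfl⟩ | houtb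
    · rw [pf2_comm a (ZL j) (FreeMonoid.toList v),
        pf2_comm a (ZL j) (FreeMonoid.toList (hatA n m ρ)),
        pf2_notmem ha.1, pf2_notmem ha.2, hZcnt j hj1 hj2]
    · rw [pf2_comm a (TL j) (FreeMonoid.toList v),
        pf2_comm a (TL j) (FreeMonoid.toList (hatA n m ρ)),
        pf2_notmem ha.1, pf2_notmem ha.2, hTcnt j hj1 hj2]
    · have hb := thmFNE hmap hmaster b houtb
      rw [pf2_nil ha.1 hb.1, pf2_nil ha.2 hb.2]
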